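/- arXiv:1604.01106 — 7 statements merged into one kernel-verified Lean document; each statement's English description precedes it below -/
import Mathlib

section
/- The sequence u_n = ∑_{k=0}^{n} C(n,k)^2 · C(n+k,n) · C(2k,n) satisfies, for all n ≥ 1, the recurrence (n+1)^3 · u_{n+1} = (2n+1)(13n^2+13n+4) · u_n + 3n(3n−1)(3n+1) · u_{n−1}, with u_0 = 1 and u_1 = 4. -/
set_option maxRecDepth 100000

open Finset

private def Fq (n k : ℕ) : ℚ :=
  (n.choose k : ℚ)^2 * ((n+k).choose n : ℚ) * ((2*k).choose n : ℚ)

private def Tq (m : ℕ) : ℕ → ℚ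
  | 0 => 0
  | (k+1) => ((m:ℚ)+2) *
      (((m:ℚ)+2)^2*(7*(m:ℚ)+11) - 13*(2*(m:ℚ)+3)*((m:ℚ)+2)*((k:ℚ)+1)
        + (15*(m:ℚ)+22)*((k:ℚ)+1)^2)
      * ((m+1).choose k : ℚ)^2 * ((m+1+k).choose m : ℚ) * ((2*k+2).choose (m+2) : ℚ)

private lemma chq (a b c : ℕ) (h1 : b ≤ a) (h2 : a - b = c) :
    ((a.choose b : ℚ)) = a.factorial / (b.factorial * c.factorial) := by
  rw [Nat.cast_choose ℚ h1, h2]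

private lemma fs (x y : ℕ) (h : x = y + 1) :
    ((x.factorial : ℚ)) = (x : ℚ) * y.factorial := by
  subst h; exact_mod_cast Nat.factorial_succ y

private lemma fnz (x : ℕ) : ((x.factorial : ℚ)) ≠ 0 := by
  exact_mod_cast (Nat.factorial_pos x).ne'

private lemma chz (a b : ℕ) (h : a < b) : ((a.choose b : ℚ)) = 0 := by
  rw [Nat.choose_eq_zero_of_lt h]; norm_num

set_option maxHeartbeats 1000000 in
private lemma ratio1 (a b : ℕ) :
    ((a:ℚ)+1)^2 * (((2*a+b+3).choose (a+b+2) : ℚ)^2 * ((2*a+b+3+(a+b+2)).choose (2*a+b+3) : ℚ) * ((2*(a+b+2)).choose (2*a+b+3) : ℚ)) = (3*(a:ℚ)+2*(b:ℚ)+5)*((b:ℚ)+2) * (((2*a+b+2).choose (a+b+2) : ℚ)^2 * ((2*a+b+2+(a+b+2)).choose (2*a+b+2) : ℚ) * ((2*(a+b+2)).choose (2*a+b+2) : ℚ)) := by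
  try rw [show 2*a+b+2+1+(a+b+2) = 3*a+2*b+5 from by ring]
  try rw [show 2*a+b+2+1+(a+b+1) = 3*a+2*b+4 from by ring]
  try rw [show 2*a+b+4+(a+b+2) = 3*a+2*b+6 from by ring]
  try rw [show 2*a+b+3+(a+b+2) = 3*a+2*b+5 from by ring]
  try rw [show 2*a+b+2+(a+b+2) = 3*a+2*b+4 from by ring]
  try rw [show 2*(a+b+2)+2 = 2*a+2*b+6 from by ring]
  try rw [show 2*(a+b+1)+2 = 2*a+2*b+4 from by ring]
  try rw [show 2*(a+b+2) = 2*a+2*b+4 from by ring]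
  try rw [show 2*a+b+2+2 = 2*a+b+4 from by ring]
  try rw [show 2*a+b+2+1 = 2*a+b+3 from by ring]
  rw [chq (2*a+b+3) (a+b+2) (a+1) (by omega) (by omega),
    chq (3*a+2*b+5) (2*a+b+3) (a+b+2) (by omega) (by omega),
    chq (2*a+2*b+4) (2*a+b+3) (b+1) (by omega) (by omega),
    chq (2*a+b+2) (a+b+2) (a) (by omega) (by omega),
    chq (3*a+2*b+4) (2*a+b+2) (a+b+2) (by omega) (by omega),
    chq (2*a+2*b+4) (2*a+b+2) (b+2) (by omega) (by omega)]
  simp only [fs (2*a+b+4) (2*a+b+3) (by omega),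
    fs (2*a+b+3) (2*a+b+2) (by omega),
    fs (3*a+2*b+6) (3*a+2*b+5) (by omega),
    fs (3*a+2*b+5) (3*a+2*b+4) (by omega),
    fs (2*a+2*b+6) (2*a+2*b+5) (by omega),
    fs (2*a+2*b+5) (2*a+2*b+4) (by omega),
    fs (a+b+3) (a+b+2) (by omega),
    fs (a+b+2) (a+b+1) (by omega),
    fs (a+2) (a+1) (by omega),
    fs (a+1) (a) (by omega),
    fs (b+2) (b+1) (by omega),
    fs (b+1) (b) (by omega)]
  push_cast
  field_simp

set_option maxHeartbeats 1000000 in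
private lemma ratio2 (a b : ℕ) :
    ((a:ℚ)+2)^2 * (((2*a+b+4).choose (a+b+2) : ℚ)^2 * ((2*a+b+4+(a+b+2)).choose (2*a+b+4) : ℚ) * ((2*(a+b+2)).choose (2*a+b+4) : ℚ)) = (3*(a:ℚ)+2*(b:ℚ)+6)*((b:ℚ)+1) * (((2*a+b+3).choose (a+b+2) : ℚ)^2 * ((2*a+b+3+(a+b+2)).choose (2*a+b+3) : ℚ) * ((2*(a+b+2)).choose (2*a+b+3) : ℚ)) := by
  try rw [show 2*a+b+2+1+(a+b+2) = 3*a+2*b+5 from by ring]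
  try rw [show 2*a+b+2+1+(a+b+1) = 3*a+2*b+4 from by ring]
  try rw [show 2*a+b+4+(a+b+2) = 3*a+2*b+6 from by ring]
  try rw [show 2*a+b+3+(a+b+2) = 3*a+2*b+5 from by ring]
  try rw [show 2*a+b+2+(a+b+2) = 3*a+2*b+4 from by ring]
  try rw [show 2*(a+b+2)+2 = 2*a+2*b+6 from by ring]
  try rw [show 2*(a+b+1)+2 = 2*a+2*b+4 from by ring]
  try rw [show 2*(a+b+2) = 2*a+2*b+4 from by ring]
  try rw [show 2*a+b+2+2 = 2*a+b+4 from by ring]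
  try rw [show 2*a+b+2+1 = 2*a+b+3 from by ring]
  rw [chq (2*a+b+4) (a+b+2) (a+2) (by omega) (by omega),
    chq (3*a+2*b+6) (2*a+b+4) (a+b+2) (by omega) (by omega),
    chq (2*a+2*b+4) (2*a+b+4) (b) (by omega) (by omega),
    chq (2*a+b+3) (a+b+2) (a+1) (by omega) (by omega),
    chq (3*a+2*b+5) (2*a+b+3) (a+b+2) (by omega) (by omega),
    chq (2*a+2*b+4) (2*a+b+3) (b+1) (by omega) (by omega)]
  simp only [fs (2*a+b+4) (2*a+b+3) (by omega),
    fs (2*a+b+3) (2*a+b+2) (by omega),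
    fs (3*a+2*b+6) (3*a+2*b+5) (by omega),
    fs (3*a+2*b+5) (3*a+2*b+4) (by omega),
    fs (2*a+2*b+6) (2*a+2*b+5) (by omega),
    fs (2*a+2*b+5) (2*a+2*b+4) (by omega),
    fs (a+b+3) (a+b+2) (by omega),
    fs (a+b+2) (a+b+1) (by omega),
    fs (a+2) (a+1) (by omega),
    fs (a+1) (a) (by omega),
    fs (b+2) (b+1) (by omega),
    fs (b+1) (b) (by omega)]
  push_cast
  field_simp

set_option maxHeartbeats 1000000 in
private lemma ratio3 (a b : ℕ) :
    ((a:ℚ)+2)^2*((a:ℚ)+1)^2*(2*(a:ℚ)+(b:ℚ)+4) * (((2*a+b+2+1).choose (a+b+1) : ℚ)^2 * ((2*a+b+2+1+(a+b+1)).choose (2*a+b+2) : ℚ) * ((2*(a+b+1)+2).choose (2*a+b+2+2) : ℚ)) = (2*(a:ℚ)+(b:ℚ)+3)*((a:ℚ)+(b:ℚ)+2)^2*((b:ℚ)+1)*((b:ℚ)+2) * (((2*a+b+2).choose (a+b+2) : ℚ)^2 * ((2*a+b+2+(a+b+2)).choose (2*a+b+2) : ℚ) * ((2*(a+b+2)).choose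 (2*a+b+2) : ℚ)) := by
  try rw [show 2*a+b+2+1+(a+b+2) = 3*a+2*b+5 from by ring]
  try rw [show 2*a+b+2+1+(a+b+1) = 3*a+2*b+4 from by ring]
  try rw [show 2*a+b+4+(a+b+2) = 3*a+2*b+6 from by ring]
  try rw [show 2*a+b+3+(a+b+2) = 3*a+2*b+5 from by ring]
  try rw [show 2*a+b+2+(a+b+2) = 3*a+2*b+4 from by ring]
  try rw [show 2*(a+b+2)+2 = 2*a+2*b+6 from by ring]
  try rw [show 2*(a+b+1)+2 = 2*a+2*b+4 from by ring]
  try rw [show 2*(a+b+2) = 2*a+2*b+4 from by ring]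
  try rw [show 2*a+b+2+2 = 2*a+b+4 from by ring]
  try rw [show 2*a+b+2+1 = 2*a+b+3 from by ring]
  rw [chq (2*a+b+3) (a+b+1) (a+2) (by omega) (by omega),
    chq (3*a+2*b+4) (2*a+b+2) (a+b+2) (by omega) (by omega),
    chq (2*a+2*b+4) (2*a+b+4) (b) (by omega) (by omega),
    chq (2*a+b+2) (a+b+2) (a) (by omega) (by omega),
    chq (2*a+2*b+4) (2*a+b+2) (b+2) (by omega) (by omega)]
  simp only [fs (2*a+b+4) (2*a+b+3) (by omega),
    fs (2*a+b+3) (2*a+b+2) (by omega),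
    fs (3*a+2*b+6) (3*a+2*b+5) (by omega),
    fs (3*a+2*b+5) (3*a+2*b+4) (by omega),
    fs (2*a+2*b+6) (2*a+2*b+5) (by omega),
    fs (2*a+2*b+5) (2*a+2*b+4) (by omega),
    fs (a+b+3) (a+b+2) (by omega),
    fs (a+b+2) (a+b+1) (by omega),
    fs (a+2) (a+1) (by omega),
    fs (a+1) (a) (by omega),
    fs (b+2) (b+1) (by omega),
    fs (b+1) (b) (by omega)]
  push_cast
  field_simp

set_option maxHeartbeats 1000000 in
private lemma ratio4 (a b : ℕ) :
    ((a:ℚ)+1)^2*((a:ℚ)+(b:ℚ)+3)*(2*(a:ℚ)+(b:ℚ)+4) * (((2*a+b+2+1).choose (a+b+2) : ℚ)^2 * ((2*a+b+2+1+(a+b+2)).choose (2*a+b+2) : ℚ) * ((2*(a+b+2)+2).choose (2*a+b+2+2) : ℚ)) = (2*(a:ℚ)+(b:ℚ)+3)*(3*(a:ℚ)+2*(b:ℚ)+5)*(2*(a:ℚ)+2*(b:ℚ)+5)*(2*(a:ℚ)+2*(b:ℚ)+6) * (((2*a+b+2).choose (a+b+2) : ℚ)^2 * ((2*a+b+2+(a+b+2)).choose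 (2*a+b+2) : ℚ) * ((2*(a+b+2)).choose (2*a+b+2) : ℚ)) := by
  try rw [show 2*a+b+2+1+(a+b+2) = 3*a+2*b+5 from by ring]
  try rw [show 2*a+b+2+1+(a+b+1) = 3*a+2*b+4 from by ring]
  try rw [show 2*a+b+4+(a+b+2) = 3*a+2*b+6 from by ring]
  try rw [show 2*a+b+3+(a+b+2) = 3*a+2*b+5 from by ring]
  try rw [show 2*a+b+2+(a+b+2) = 3*a+2*b+4 from by ring]
  try rw [show 2*(a+b+2)+2 = 2*a+2*b+6 from by ring]
  try rw [show 2*(a+b+1)+2 = 2*a+2*b+4 from by ring]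
  try rw [show 2*(a+b+2) = 2*a+2*b+4 from by ring]
  try rw [show 2*a+b+2+2 = 2*a+b+4 from by ring]
  try rw [show 2*a+b+2+1 = 2*a+b+3 from by ring]
  rw [chq (2*a+b+3) (a+b+2) (a+1) (by omega) (by omega),
    chq (3*a+2*b+5) (2*a+b+2) (a+b+3) (by omega) (by omega),
    chq (2*a+2*b+6) (2*a+b+4) (b+2) (by omega) (by omega),
    chq (2*a+b+2) (a+b+2) (a) (by omega) (by omega),
    chq (3*a+2*b+4) (2*a+b+2) (a+b+2) (by omega) (by omega),
    chq (2*a+2*b+4) (2*a+b+2) (b+2) (by omega) (by omega)]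
  simp only [fs (2*a+b+4) (2*a+b+3) (by omega),
    fs (2*a+b+3) (2*a+b+2) (by omega),
    fs (3*a+2*b+6) (3*a+2*b+5) (by omega),
    fs (3*a+2*b+5) (3*a+2*b+4) (by omega),
    fs (2*a+2*b+6) (2*a+2*b+5) (by omega),
    fs (2*a+2*b+5) (2*a+2*b+4) (by omega),
    fs (a+b+3) (a+b+2) (by omega),
    fs (a+b+2) (a+b+1) (by omega),
    fs (a+2) (a+1) (by omega),
    fs (a+1) (a) (by omega),
    fs (b+2) (b+1) (by omega),
    fs (b+1) (b) (by omega)]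
  push_cast
  field_simp

set_option maxHeartbeats 1000000 in
private lemma generic (a b : ℕ) :
    (((2*a+b+2 : ℕ) : ℚ) + 1) * ( (((2*a+b+2 : ℕ) : ℚ) + 2)^3 * Fq (2*a+b+4) (a+b+2)
      - (2*((2*a+b+2 : ℕ) : ℚ)+3)*(13*((2*a+b+2 : ℕ) : ℚ)^2+39*((2*a+b+2 : ℕ) : ℚ)+30) * Fq (2*a+b+3) (a+b+2)
      - 3*(((2*a+b+2 : ℕ) : ℚ)+1)*(3*((2*a+b+2 : ℕ) : ℚ)+2)*(3*((2*a+b+2 : ℕ) : ℚ)+4) * Fq (2*a+b+2) (a+b+2) )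
    = Tq (2*a+b+2) ((a+b+2)+1) - Tq (2*a+b+2) ((a+b+1)+1) := by
  simp only [Fq, Tq]
  push_cast
  have hc : (((a:ℚ)+2)^2*((a:ℚ)+1)^2*((a:ℚ)+(b:ℚ)+3)*(2*(a:ℚ)+(b:ℚ)+4)) ≠ 0 := by positivity
  apply mul_left_cancel₀ hc
  linear_combination
    ((-147456:ℚ) + (-244176:ℚ)*(b:ℚ) + (-159172:ℚ)*(b:ℚ)^2 + (-47756:ℚ)*(b:ℚ)^3 + (-3854:ℚ)*(b:ℚ)^4 + (1560:ℚ)*(b:ℚ)^5 + (480:ℚ)*(b:ℚ)^6 + (52:ℚ)*(b:ℚ)^7 + (2:ℚ)*(b:ℚ)^8 + (-630432:ℚ)*(a:ℚ) + (-918768:ℚ)*(a:ℚ)*(b:ℚ) + (-519312:ℚ)*(a:ℚ)*(b:ℚ)^2 + (-133884:ℚ)*(a:ℚ)*(b:ℚ)^3 + (-10607:ℚ)*(a:ℚ)*(b:ℚ)^4 + (1995:ℚ)*(a:ℚ)*(b:ℚ)^5 + (455:ℚ)*(a:ℚ)*(b:ℚ)^6 + (25:ℚ)*(a:ℚ)*(b:ℚ)^7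 + (-1172816:ℚ)*(a:ℚ)^2 + (-1473460:ℚ)*(a:ℚ)^2*(b:ℚ) + (-701533:ℚ)*(a:ℚ)^2*(b:ℚ)^2 + (-148627:ℚ)*(a:ℚ)^2*(b:ℚ)^3 + (-10206:ℚ)*(a:ℚ)^2*(b:ℚ)^4 + (815:ℚ)*(a:ℚ)^2*(b:ℚ)^5 + (107:ℚ)*(a:ℚ)^2*(b:ℚ)^6 + (-1239816:ℚ)*(a:ℚ)^3 + (-1305576:ℚ)*(a:ℚ)^3*(b:ℚ) + (-502387:ℚ)*(a:ℚ)^3*(b:ℚ)^2 + (-81756:ℚ)*(a:ℚ)^3*(b:ℚ)^3 + (-4173:ℚ)*(a:ℚ)^3*(b:ℚ)^4 + (104:ℚ)*(a:ℚ)^3*(b:ℚ)^5 + (-814428:ℚ)*(a:ℚ)^4 + (-690248:ℚ)*(a:ℚ)^4*(b:ℚ) + (-201192:ℚ)*(a:ℚ)^4*(b:ℚ)^2 + (-22304:ℚ)*(a:ℚ)^4*(b:ℚ)^3 + (-620:ℚ)*(a:ℚ)^4*(b:ℚ)^4 + (-340332:ℚ)*(a:ℚ)^5 + (-217728:ℚ)*(a:ℚ)^5*(b:ℚ)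 + (-42728:ℚ)*(a:ℚ)^5*(b:ℚ)^2 + (-2416:ℚ)*(a:ℚ)^5*(b:ℚ)^3 + (-88320:ℚ)*(a:ℚ)^6 + (-37936:ℚ)*(a:ℚ)^6*(b:ℚ) + (-3760:ℚ)*(a:ℚ)^6*(b:ℚ)^2 + (-13008:ℚ)*(a:ℚ)^7 + (-2816:ℚ)*(a:ℚ)^7*(b:ℚ) + (-832:ℚ)*(a:ℚ)^8) * ratio1 a b
    + ((2304:ℚ) + (3840:ℚ)*(b:ℚ) + (2656:ℚ)*(b:ℚ)^2 + (976:ℚ)*(b:ℚ)^3 + (201:ℚ)*(b:ℚ)^4 + (22:ℚ)*(b:ℚ)^5 + (1:ℚ)*(b:ℚ)^6 + (11520:ℚ)*(a:ℚ) + (17280:ℚ)*(a:ℚ)*(b:ℚ) + (10624:ℚ)*(a:ℚ)*(b:ℚ)^2 + (3416:ℚ)*(a:ℚ)*(b:ℚ)^3 + (603:ℚ)*(a:ℚ)*(b:ℚ)^4 + (55:ℚ)*(a:ℚ)*(b:ℚ)^5 + (2:ℚ)*(a:ℚ)*(b:ℚ)^6 + (24704:ℚ)*(a:ℚ)^2 +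 (32576:ℚ)*(a:ℚ)^2*(b:ℚ) + (17240:ℚ)*(a:ℚ)^2*(b:ℚ)^2 + (4632:ℚ)*(a:ℚ)^2*(b:ℚ)^3 + (653:ℚ)*(a:ℚ)^2*(b:ℚ)^4 + (44:ℚ)*(a:ℚ)^2*(b:ℚ)^5 + (1:ℚ)*(a:ℚ)^2*(b:ℚ)^6 + (29696:ℚ)*(a:ℚ)^3 + (33376:ℚ)*(a:ℚ)^3*(b:ℚ) + (14536:ℚ)*(a:ℚ)^3*(b:ℚ)^2 + (3040:ℚ)*(a:ℚ)^3*(b:ℚ)^3 + (301:ℚ)*(a:ℚ)^3*(b:ℚ)^4 + (11:ℚ)*(a:ℚ)^3*(b:ℚ)^5 + (21904:ℚ)*(a:ℚ)^4 + (20096:ℚ)*(a:ℚ)^4*(b:ℚ) + (6728:ℚ)*(a:ℚ)^4*(b:ℚ)^2 + (968:ℚ)*(a:ℚ)^4*(b:ℚ)^3 + (50:ℚ)*(a:ℚ)^4*(b:ℚ)^4 + (10160:ℚ)*(a:ℚ)^5 + (7120:ℚ)*(a:ℚ)^5*(b:ℚ) + (1624:ℚ)*(a:ℚ)^5*(b:ℚ)^2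 + (120:ℚ)*(a:ℚ)^5*(b:ℚ)^3 + (2896:ℚ)*(a:ℚ)^6 + (1376:ℚ)*(a:ℚ)^6*(b:ℚ) + (160:ℚ)*(a:ℚ)^6*(b:ℚ)^2 + (464:ℚ)*(a:ℚ)^7 + (112:ℚ)*(a:ℚ)^7*(b:ℚ) + (32:ℚ)*(a:ℚ)^8) * ratio2 a b
    + ((-1440:ℚ) + (-2928:ℚ)*(b:ℚ) + (-1986:ℚ)*(b:ℚ)^2 + (-600:ℚ)*(b:ℚ)^3 + (-82:ℚ)*(b:ℚ)^4 + (-4:ℚ)*(b:ℚ)^5 + (-3504:ℚ)*(a:ℚ) + (-5664:ℚ)*(a:ℚ)*(b:ℚ) + (-2885:ℚ)*(a:ℚ)*(b:ℚ)^2 + (-583:ℚ)*(a:ℚ)*(b:ℚ)^3 + (-40:ℚ)*(a:ℚ)*(b:ℚ)^4 + (-3384:ℚ)*(a:ℚ)^2 + (-4076:ℚ)*(a:ℚ)^2*(b:ℚ) + (-1388:ℚ)*(a:ℚ)^2*(b:ℚ)^2 + (-141:ℚ)*(a:ℚ)^2*(b:ℚ)^3 + (-1620:ℚ)*(a:ℚ)^3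 + (-1292:ℚ)*(a:ℚ)^3*(b:ℚ) + (-221:ℚ)*(a:ℚ)^3*(b:ℚ)^2 + (-384:ℚ)*(a:ℚ)^4 + (-152:ℚ)*(a:ℚ)^4*(b:ℚ) + (-36:ℚ)*(a:ℚ)^5) * ratio3 a b
    + ((3584:ℚ) + (3936:ℚ)*(b:ℚ) + (1560:ℚ)*(b:ℚ)^2 + (264:ℚ)*(b:ℚ)^3 + (16:ℚ)*(b:ℚ)^4 + (10624:ℚ)*(a:ℚ) + (9952:ℚ)*(a:ℚ)*(b:ℚ) + (3204:ℚ)*(a:ℚ)*(b:ℚ)^2 + (408:ℚ)*(a:ℚ)*(b:ℚ)^3 + (16:ℚ)*(a:ℚ)*(b:ℚ)^4 + (12896:ℚ)*(a:ℚ)^2 + (9960:ℚ)*(a:ℚ)^2*(b:ℚ) + (2454:ℚ)*(a:ℚ)^2*(b:ℚ)^2 + (210:ℚ)*(a:ℚ)^2*(b:ℚ)^3 + (4:ℚ)*(a:ℚ)^2*(b:ℚ)^4 + (8176:ℚ)*(a:ℚ)^3 + (4928:ℚ)*(a:ℚ)^3*(b:ℚ) + (831:ℚ)*(a:ℚ)^3*(b:ℚ)^2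 + (36:ℚ)*(a:ℚ)^3*(b:ℚ)^3 + (2840:ℚ)*(a:ℚ)^4 + (1204:ℚ)*(a:ℚ)^4*(b:ℚ) + (105:ℚ)*(a:ℚ)^4*(b:ℚ)^2 + (508:ℚ)*(a:ℚ)^5 + (116:ℚ)*(a:ℚ)^5*(b:ℚ) + (36:ℚ)*(a:ℚ)^6) * ratio4 a b

set_option maxHeartbeats 1000000 in
set_option maxRecDepth 40000 in
private lemma key (m k : ℕ) :
    ((m:ℚ)+1) * ( ((m:ℚ)+2)^3 * Fq (m+2) k
      - (2*(m:ℚ)+3)*(13*(m:ℚ)^2+39*(m:ℚ)+30) * Fq (m+1) k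
      - 3*((m:ℚ)+1)*(3*(m:ℚ)+2)*(3*(m:ℚ)+4) * Fq m k )
    = Tq m (k+1) - Tq m k := by
  rcases k with _ | j
  · rcases m with _ | m
    · norm_num [Fq, Tq, Nat.choose]
    · simp only [Fq, Tq]
      rw [chz (2*0) (m+1+2) (by omega), chz (2*0) (m+1+1) (by omega),
        chz (2*0) (m+1) (by omega), chz (2*0+2) (m+1+2) (by omega)]
      ring
  · by_cases h1 : m + 2 ≤ j
    · simp only [Fq, Tq]
      rw [chz (m+2) (j+1) (by omega), chz (m+1) (j+1) (by omega),
        chz m (j+1) (by omega), chz (m+1) j (by omega)]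
      ring
    · by_cases h2 : j = m + 1
      · subst h2
        simp only [Fq, Tq]
        try rw [show m+1+1 = m+2 from by omega]
        try rw [show m+2+(m+2) = 2*m+4 from by omega]
        try rw [show m+1+(m+1) = 2*m+2 from by omega]
        try rw [show 2*(m+2) = 2*m+4 from by omega]
        try rw [show 2*(m+1)+2 = 2*m+4 from by omega]
        try rw [show 2*m+4+2 = 2*m+6 from by omega]
        rw [chz (m+1) (m+2) (by omega), chz m (m+2) (by omega)]
        rw [chq (2*m+4) (m+2) (m+2) (by omega) (by omega),
          chq (2*m+2) (m) (m+2) (by omega) (by omega),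
          chq (m+2) (m+2) (0) (by omega) (by omega),
          chq (m+1) (m+1) (0) (by omega) (by omega)]
        simp only [Nat.factorial_zero, fs (2*m+4) (2*m+3) (by omega),
          fs (2*m+3) (2*m+2) (by omega), fs (m+2) (m+1) (by omega), fs (m+1) (m) (by omega)]
        push_cast
        field_simp
        ring
      · by_cases h3 : j = m
        · subst h3
          simp only [Fq, Tq]
          try rw [show j+2+(j+1) = 2*j+3 from by omega]
          try rw [show j+1+(j+1) = 2*j+2 from by omega]
          try rw [show 2*(j+1)+2 = 2*j+4 from by omega]
          try rw [show 2*(j+1) = 2*j+2 from by omega]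
          try rw [show j+1+j = 2*j+1 from by omega]
          rw [chz j (j+1) (by omega)]
          rw [chq (j+2) (j+1) (1) (by omega) (by omega),
            chq (2*j+3) (j+2) (j+1) (by omega) (by omega),
            chq (2*j+2) (j+2) (j) (by omega) (by omega),
            chq (2*j+2) (j+1) (j+1) (by omega) (by omega),
            chq (2*j+2) (j) (j+2) (by omega) (by omega),
            chq (2*j+4) (j+2) (j+2) (by omega) (by omega),
            chq (j+1) (j) (1) (by omega) (by omega),
            chq (2*j+1) (j) (j+1) (by omega) (by omega),
            chq (j+1) (j+1) (0) (by omega) (by omega)]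
          simp only [Nat.factorial_zero, Nat.factorial_one,
            fs (2*j+4) (2*j+3) (by omega), fs (2*j+3) (2*j+2) (by omega),
            fs (2*j+2) (2*j+1) (by omega), fs (j+2) (j+1) (by omega), fs (j+1) (j) (by omega)]
          push_cast
          field_simp
          ring
        · have hj1 : j + 1 ≤ m := by omega
          by_cases h4 : 2*j + 3 ≤ m
          · simp only [Fq, Tq]
            rw [chz (2*(j+1)) (m+2) (by omega), chz (2*(j+1)) (m+1) (by omega),
              chz (2*(j+1)) m (by omega), chz (2*(j+1)+2) (m+2) (by omega),
              chz (2*j+2) (m+2) (by omega)]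
            ring
          · by_cases h5 : m = 2*j+2
            · subst h5
              simp only [Fq, Tq]
              try rw [show 2*j+2+2+(j+1) = 3*j+5 from by omega]
              try rw [show 2*j+2+1+(j+1) = 3*j+4 from by omega]
              try rw [show 2*j+2+1+j = 3*j+3 from by omega]
              try rw [show 2*j+2+(j+1) = 3*j+3 from by omega]
              try rw [show 2*(j+1)+2 = 2*j+4 from by omega]
              try rw [show 2*(j+1) = 2*j+2 from by omega]
              try rw [show 2*j+2+2 = 2*j+4 from by omega]
              try rw [show 2*j+2+1 = 2*j+3 from by omega]
              rw [chz (2*j+2) (2*j+4) (by omega), chz (2*j+2) (2*j+3) (by omega)]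
              rw [chq (2*j+2) (j+1) (j+1) (by omega) (by omega),
                chq (3*j+3) (2*j+2) (j+1) (by omega) (by omega),
                chq (2*j+2) (2*j+2) (0) (by omega) (by omega),
                chq (2*j+3) (j+1) (j+2) (by omega) (by omega),
                chq (3*j+4) (2*j+2) (j+2) (by omega) (by omega),
                chq (2*j+4) (2*j+4) (0) (by omega) (by omega)]
              simp only [Nat.factorial_zero,
                fs (3*j+4) (3*j+3) (by omega), fs (2*j+4) (2*j+3) (by omega),
                fs (2*j+3) (2*j+2) (by omega), fs (j+2) (j+1) (by omega), fs (j+1) (j) (by omega)]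
              push_cast
              field_simp
              ring
            · by_cases h6 : m = 2*j+1
              · subst h6
                simp only [Fq, Tq]
                try rw [show 2*j+1+2+(j+1) = 3*j+4 from by omega]
                try rw [show 2*j+1+1+(j+1) = 3*j+3 from by omega]
                try rw [show 2*j+1+1+j = 3*j+2 from by omega]
                try rw [show 2*j+1+(j+1) = 3*j+2 from by omega]
                try rw [show 2*(j+1)+2 = 2*j+4 from by omega]
                try rw [show 2*(j+1) = 2*j+2 from by omega]
                try rw [show 2*j+1+2 = 2*j+3 from by omega]
                try rw [show 2*j+1+1 = 2*j+2 from by omega]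
                rw [chz (2*j+2) (2*j+3) (by omega)]
                rw [chq (2*j+2) (j+1) (j+1) (by omega) (by omega),
                  chq (3*j+3) (2*j+2) (j+1) (by omega) (by omega),
                  chq (2*j+2) (2*j+2) (0) (by omega) (by omega),
                  chq (2*j+1) (j+1) (j) (by omega) (by omega),
                  chq (3*j+2) (2*j+1) (j+1) (by omega) (by omega),
                  chq (2*j+2) (2*j+1) (1) (by omega) (by omega),
                  chq (3*j+3) (2*j+1) (j+2) (by omega) (by omega),
                  chq (2*j+4) (2*j+3) (1) (by omega) (by omega)]
                simp only [Nat.factorial_zero, Nat.factorial_one,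
                  fs (2*j+4) (2*j+3) (by omega), fs (2*j+3) (2*j+2) (by omega),
                  fs (2*j+2) (2*j+1) (by omega), fs (3*j+3) (3*j+2) (by omega),
                  fs (j+2) (j+1) (by omega), fs (j+1) (j) (by omega)]
                push_cast
                field_simp
                ring
              · obtain ⟨a, b, rfl, rfl⟩ :
                    ∃ a b, j = a + b + 1 ∧ m = 2*a + b + 2 :=
                  ⟨m - j - 1, 2*j - m, by omega, by omega⟩
                exact generic a b

private lemma tele (m : ℕ) :
    ∑ k ∈ range (m+3), (Tq m (k+1) - Tq m k) = 0 := by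
  rw [Finset.sum_range_sub (Tq m)]
  have h1 : (m+1).choose (m+2) = 0 := Nat.choose_eq_zero_of_lt (by omega)
  show Tq m ((m+2)+1) - Tq m 0 = 0
  simp [Tq, h1]

theorem apery_like_recurrence (u : ℕ → ℤ)
    (hu : ∀ n : ℕ, u n = ∑ k ∈ Finset.range (n + 1),
      (n.choose k : ℤ) ^ 2 * ((n + k).choose n) * ((2 * k).choose n)) :
    u 0 = 1 ∧ u 1 = 4 ∧ ∀ n : ℕ, 1 ≤ n →
      ((n : ℤ) + 1) ^ 3 * u (n + 1) =
        (2 * (n : ℤ) + 1) * (13 * (n : ℤ) ^ 2 + 13 * n + 4) * u n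
          + 3 * (n : ℤ) * (3 * n - 1) * (3 * n + 1) * u (n - 1) := by
  have hq : ∀ N : ℕ, (u N : ℚ) = ∑ k ∈ range (N+1), Fq N k := by
    intro N
    rw [hu N]
    push_cast
    simp [Fq]
  refine ⟨?_, ?_, ?_⟩
  · rw [hu 0]; decide
  · rw [hu 1]; decide
  · intro n hn
    obtain ⟨m, rfl⟩ : ∃ m, n = m + 1 := ⟨n - 1, by omega⟩
    simp only [Nat.add_sub_cancel]
    have hz : ∀ a b : ℕ, a < b → Fq a b = 0 := by
      intro a b h
      simp [Fq, Nat.choose_eq_zero_of_lt h]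
    have s2 : (u (m+2) : ℚ) = ∑ k ∈ range (m+3), Fq (m+2) k := hq (m+2)
    have s1 : (u (m+1) : ℚ) = ∑ k ∈ range (m+3), Fq (m+1) k := by
      rw [hq (m+1)]
      have e1 : ∑ k ∈ range (m+2+1), Fq (m+1) k
          = ∑ k ∈ range (m+1+1), Fq (m+1) k + Fq (m+1) (m+2) :=
        Finset.sum_range_succ _ _
      rw [show m+3 = m+2+1 from rfl, e1, hz (m+1) (m+2) (by omega), add_zero]
    have s0 : (u m : ℚ) = ∑ k ∈ range (m+3), Fq m k := by
      rw [hq m]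
      have e1 : ∑ k ∈ range (m+2+1), Fq m k
          = ∑ k ∈ range (m+1+1), Fq m k + Fq m (m+2) :=
        Finset.sum_range_succ _ _
      have e2 : ∑ k ∈ range (m+1+1), Fq m k
          = ∑ k ∈ range (m+1), Fq m k + Fq m (m+1) :=
        Finset.sum_range_succ _ _
      rw [show m+3 = m+2+1 from rfl, e1, e2, hz m (m+1) (by omega),
        hz m (m+2) (by omega), add_zero, add_zero]
    have main : ((m:ℚ)+1) * ( ((m:ℚ)+2)^3 * (u (m+2) : ℚ)
        - (2*(m:ℚ)+3)*(13*(m:ℚ)^2+39*(m:ℚ)+30) * (u (m+1) : ℚ)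
        - 3*((m:ℚ)+1)*(3*(m:ℚ)+2)*(3*(m:ℚ)+4) * (u m : ℚ) ) = 0 := by
      rw [s2, s1, s0, Finset.mul_sum, Finset.mul_sum, Finset.mul_sum,
        ← Finset.sum_sub_distrib, ← Finset.sum_sub_distrib, Finset.mul_sum]
      rw [Finset.sum_congr rfl (fun k _ => key m k)]
      exact tele m
    have hX : ((m:ℚ)+2)^3 * (u (m+2) : ℚ)
        - (2*(m:ℚ)+3)*(13*(m:ℚ)^2+39*(m:ℚ)+30) * (u (m+1) : ℚ)
        - 3*((m:ℚ)+1)*(3*(m:ℚ)+2)*(3*(m:ℚ)+4) * (u m : ℚ) = 0 := by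
      rcases mul_eq_zero.mp main with h | h
      · exact absurd h (by positivity)
      · exact h
    have goalq : ((m:ℚ)+1+1)^3 * (u (m+1+1) : ℚ) =
        (2*((m:ℚ)+1)+1)*(13*((m:ℚ)+1)^2+13*((m:ℚ)+1)+4) * (u (m+1) : ℚ)
          + 3*((m:ℚ)+1)*(3*((m:ℚ)+1)-1)*(3*((m:ℚ)+1)+1) * (u m : ℚ) := by
      have e : m+1+1 = m+2 := rfl
      rw [e]
      linear_combination hX
    exact_mod_cast goalq
end

section
/- Define the sequence (c_n)_{n≥0} by c_0 = 1 and, for n ≥ 1, c_n = ∑_{k=0}^{⌊n/2⌋} C(n+k+1, 3k+1) · 1^{n−2k} · c_k − ∑_{k=0}^{n−1} C(n+2k+1, 3k+1) · (−1)^{n−k} · c_k (i.e., the self-replication recursion with λ = −1, μ = 1). Then c_n = 2^n · C(2n, n) for all n ≥ 0. -/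
open PowerSeries Finset

namespace SelfRep

noncomputable section




/-- target sequence -/
def d (n : ℕ) : ℤ := 2 ^ n * ((2 * n).choose n : ℤ)

def F : ℤ⟦X⟧ := PowerSeries.mk d

lemma coeff_F (k : ℕ) : coeff k F = d k := coeff_mk _ _

lemma sym (m : ℕ) :
    2 * ∑ k ∈ range (m + 1), (k : ℤ) * Nat.centralBinom k * Nat.centralBinom (m - k)
      = m * ∑ k ∈ range (m + 1), (Nat.centralBinom k : ℤ) * Nat.centralBinom (m - k) := by
  have h := Finset.sum_range_reflect
    (fun k => (k : ℤ) * Nat.centralBinom k * Nat.centralBinom (m - k)) (m + 1)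
  rw [two_mul]
  nth_rewrite 1 [← h]
  rw [← Finset.sum_add_distrib, Finset.mul_sum]
  apply Finset.sum_congr rfl
  intro k hk
  have hk' : k ≤ m := by simpa [Nat.lt_succ_iff] using hk
  simp only [Nat.add_sub_cancel]
  rw [Nat.sub_sub_self hk', Nat.cast_sub hk']
  ring

lemma central_conv (n : ℕ) :
    ∑ k ∈ range (n + 1), (Nat.centralBinom k : ℤ) * Nat.centralBinom (n - k) = 4 ^ n := by
  induction n with
  | zero => simp [Nat.centralBinom]
  | succ n ihn =>
    have h1 := sym (n + 1)
    have h2 := sym n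
    have hshift :
        ∑ k ∈ range (n + 2), (k : ℤ) * Nat.centralBinom k * Nat.centralBinom (n + 1 - k)
          = 4 * ∑ k ∈ range (n + 1), (k : ℤ) * Nat.centralBinom k * Nat.centralBinom (n - k)
            + 2 * ∑ k ∈ range (n + 1), (Nat.centralBinom k : ℤ) * Nat.centralBinom (n - k) := by
      rw [Finset.sum_range_succ' (fun k => (k : ℤ) * Nat.centralBinom k * Nat.centralBinom (n + 1 - k)) (n + 1)]
      simp only [Nat.cast_zero, zero_mul, add_zero]
      rw [Finset.mul_sum, Finset.mul_sum, ← Finset.sum_add_distrib]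
      apply Finset.sum_congr rfl
      intro k hk
      have hc : ((k : ℤ) + 1) * Nat.centralBinom (k + 1) = 2 * (2 * k + 1) * Nat.centralBinom k := by
        exact_mod_cast congrArg (fun x : ℕ => (x : ℤ)) (Nat.succ_mul_centralBinom_succ k)
      have hsub : n + 1 - (k + 1) = n - k := by omega
      rw [hsub]
      push_cast
      nth_rewrite 1 [show ((k : ℤ) + 1) * Nat.centralBinom (k + 1) * Nat.centralBinom (n - k)
          = (((k : ℤ) + 1) * Nat.centralBinom (k + 1)) * Nat.centralBinom (n - k) by ring]
      rw [hc]
      ring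
    have key : ((n : ℤ) + 1) *
        ∑ k ∈ range (n + 2), (Nat.centralBinom k : ℤ) * Nat.centralBinom (n + 1 - k)
        = ((n : ℤ) + 1) * (4 * 4 ^ n) := by
      have h1' : ((n : ℤ) + 1) *
          ∑ k ∈ range (n + 2), (Nat.centralBinom k : ℤ) * Nat.centralBinom (n + 1 - k)
          = 2 * ∑ k ∈ range (n + 2), (k : ℤ) * Nat.centralBinom k * Nat.centralBinom (n + 1 - k) := by
        rw [h1]; push_cast; ring
      rw [h1', hshift, ihn]
      have h2' : 2 * ∑ k ∈ range (n + 1), (k : ℤ) * Nat.centralBinom k * Nat.centralBinom (n - k)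
          = (n : ℤ) * 4 ^ n := by rw [h2, ihn]
      linarith
    have hne : ((n : ℤ) + 1) ≠ 0 := by positivity
    have := mul_left_cancel₀ hne key
    rw [this]
    ring

lemma coeff_F_sq (n : ℕ) : (coeff n) (F * F) = 8 ^ n := by
  rw [coeff_mul, Finset.Nat.sum_antidiagonal_eq_sum_range_succ_mk]
  have : ∀ k ∈ range (n + 1), (coeff k F) * (coeff (n - k) F)
      = 2 ^ n * ((Nat.centralBinom k : ℤ) * Nat.centralBinom (n - k)) := by
    intro k hk
    have hk' : k ≤ n := by simpa [Nat.lt_succ_iff] using hk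
    simp only [F, coeff_mk, d]
    rw [Nat.centralBinom, Nat.centralBinom]
    rw [show (2 : ℤ) ^ k * ((2 * k).choose k : ℤ) * (2 ^ (n - k) * ((2 * (n - k)).choose (n - k) : ℤ))
        = (2 ^ k * 2 ^ (n - k)) * (((2 * k).choose k : ℤ) * ((2 * (n - k)).choose (n - k) : ℤ)) by ring,
      ← pow_add, Nat.add_sub_cancel' hk']
  rw [Finset.sum_congr rfl this, ← Finset.mul_sum, central_conv,
    show (8:ℤ) ^ n = 2 ^ n * 4 ^ n by rw [← mul_pow]; norm_num]

lemma hF : ((1 : ℤ⟦X⟧) - C 8 * X) * (F * F) = 1 := by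
  ext n
  rw [sub_mul, one_mul, map_sub, show (C 8 * X) * (F * F) = C 8 * (X * (F * F)) by ring,
    coeff_C_mul]
  rcases n with _ | n
  · simp [coeff_F_sq, coeff_zero_X_mul]
  · rw [coeff_F_sq, coeff_succ_X_mul, coeff_F_sq, coeff_one]
    norm_num
    ring




section CompSection
/-- composition of power series, valid when `zz` has zero constant term -/
def comp (f zz : ℤ⟦X⟧) : ℤ⟦X⟧ :=
  PowerSeries.mk fun n => ∑ k ∈ range (n + 1), coeff k f * coeff n (zz ^ k)

variable {zz : ℤ⟦X⟧}


lemma coeff_upow (hu : constantCoeff zz = 0) {k n : ℕ} (h : n < k) :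
    coeff n (zz ^ k) = 0 := by
  obtain ⟨v, rfl⟩ := X_dvd_iff.2 hu
  rw [mul_pow, coeff_X_pow_mul', if_neg (by omega)]

lemma coeff_comp (f : ℤ⟦X⟧) (n : ℕ) :
    coeff n (comp f zz) = ∑ k ∈ range (n + 1), coeff k f * coeff n (zz ^ k) :=
  coeff_mk _ _

lemma coeff_comp_trunc (hu : constantCoeff zz = 0) (f : ℤ⟦X⟧) {m n : ℕ} (hmn : m ≤ n) :
    coeff m (comp f zz) = coeff m (∑ k ∈ range (n + 1), C (coeff k f) * zz ^ k) := by
  rw [coeff_comp, map_sum]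
  simp only [coeff_C_mul]
  apply Finset.sum_subset (by intro x hx; simp only [mem_range] at *; omega)
  intro k hk hk'
  simp only [mem_range] at hk hk'
  rw [coeff_upow hu (by omega), mul_zero]

lemma coeff_mul_congr {a a' b b' : ℤ⟦X⟧} (n : ℕ)
    (ha : ∀ m ≤ n, coeff m a = coeff m a')
    (hb : ∀ m ≤ n, coeff m b = coeff m b') :
    coeff n (a * b) = coeff n (a' * b') := by
  rw [coeff_mul, coeff_mul]
  apply Finset.sum_congr rfl
  rintro ⟨i, j⟩ hij
  rw [Finset.HasAntidiagonal.mem_antidiagonal] at hij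
  rw [ha i (by omega), hb j (by omega)]

lemma comp_mul (hu : constantCoeff zz = 0) (f g : ℤ⟦X⟧) :
    comp (f * g) zz = comp f zz * comp g zz := by
  ext n
  rw [coeff_comp_trunc hu _ (le_refl n),
    coeff_mul_congr n (fun m hm => coeff_comp_trunc hu f hm)
      (fun m hm => coeff_comp_trunc hu g hm), Finset.sum_mul_sum]
  have hr : ∀ i j : ℕ, (C (coeff i f) * zz ^ i) * (C (coeff j g) * zz ^ j)
      = C (coeff i f) * (C (coeff j g) * zz ^ (i + j)) := by
    intro i j; rw [pow_add]; ring
  simp only [map_sum, coeff_C_mul, hr]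
  -- LHS: ∑_{k ≤ n} coeff k (f*g) * coeff n (zz^k)
  have hl : ∀ k : ℕ, coeff k (f * g) * coeff n (zz ^ k)
      = ∑ i ∈ range (k + 1), coeff i f * (coeff (k - i) g * coeff n (zz ^ k)) := by
    intro k
    rw [coeff_mul, Finset.Nat.sum_antidiagonal_eq_sum_range_succ_mk, Finset.sum_mul]
    apply Finset.sum_congr rfl; intro i _; ring
  simp only [hl]
  set H : ℕ → ℕ → ℤ := fun a b => coeff a f * (coeff b g * coeff n (zz ^ (a + b))) with hH
  have hstep : ∑ k ∈ range (n + 1), ∑ i ∈ range (k + 1),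
        coeff i f * (coeff (k - i) g * coeff n (zz ^ k))
      = ∑ k ∈ range (n + 1), ∑ i ∈ range (k + 1), H i (k - i) := by
    apply Finset.sum_congr rfl; intro k hk
    apply Finset.sum_congr rfl; intro i hi
    simp only [mem_range] at hi
    rw [hH]
    dsimp only
    rw [show i + (k - i) = k by omega]
  rw [hstep, Finset.sum_range_diag_flip (n + 1) H]
  simp only [hH]
  apply Finset.sum_congr rfl
  intro m hm
  apply Finset.sum_subset (by intro x hx; simp only [mem_range] at *; omega)
  intro k hk hk'
  simp only [mem_range] at hk hk' hm
  rw [coeff_upow hu (by omega), mul_zero, mul_zero]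

lemma comp_C (_hu : constantCoeff zz = 0) (a : ℤ) : comp (C a) zz = C a := by
  ext n
  rw [coeff_comp]
  rw [Finset.sum_eq_single 0]
  · simp only [coeff_zero_eq_constantCoeff, constantCoeff_C, pow_zero]
    rw [coeff_one, coeff_C]
    split_ifs <;> simp
  · intro k _ hk0
    rw [coeff_C, if_neg hk0, zero_mul]
  · intro h; exact absurd (mem_range.2 (by omega)) h

lemma comp_one (hu : constantCoeff zz = 0) : comp 1 zz = 1 := by
  rw [← map_one C, comp_C hu, map_one]

lemma comp_sub (f g : ℤ⟦X⟧) : comp (f - g) zz = comp f zz - comp g zz := by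
  ext n
  simp only [comp, coeff_mk, map_sub, sub_mul, Finset.sum_sub_distrib]

lemma comp_X (hu : constantCoeff zz = 0) : comp X zz = zz := by
  ext n
  rw [coeff_comp]
  rcases n with _ | n
  · rw [Finset.sum_range_one, pow_zero]
    simp [hu]
  · rw [Finset.sum_eq_single 1]
    · simp [coeff_X]
    · intro k _ hk1; rw [coeff_X, if_neg hk1, zero_mul]
    · intro h; exact absurd (mem_range.2 (by omega)) h

lemma coeff_mul_comp (g f : ℤ⟦X⟧) (hu : constantCoeff zz = 0) (n : ℕ) :
    coeff n (g * comp f zz)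
      = ∑ k ∈ range (n + 1), coeff k f * coeff n (g * zz ^ k) := by
  rw [coeff_mul_congr n (fun m _ => rfl) (fun m hm => coeff_comp_trunc hu f hm),
    Finset.mul_sum, map_sum]
  apply Finset.sum_congr rfl
  intro k _
  rw [show g * (C (coeff k f) * zz ^ k) = C (coeff k f) * (g * zz ^ k) by ring,
    coeff_C_mul]


end CompSection

def V (p : ℕ) : ℤ⟦X⟧ := (invOneSubPow ℤ p).val

lemma V_mul_one_sub_pow (p : ℕ) : V p * ((1 : ℤ⟦X⟧) - X) ^ p = 1 := by
  have h := (invOneSubPow ℤ p).val_inv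
  rwa [invOneSubPow_inv_eq_one_sub_pow] at h

lemma V_mul_pow (a b k : ℕ) : V a * (V b) ^ k = V (a + b * k) := by
  show ((invOneSubPow ℤ a) * (invOneSubPow ℤ b) ^ k : ℤ⟦X⟧ˣ).val = _
  congr 1
  simp only [invOneSubPow_eq_inv_one_sub_pow]
  rw [← pow_mul, ← pow_add]

lemma coeff_V (p n : ℕ) : coeff n (V (p + 1)) = ((p + n).choose p : ℤ) := by
  rw [V, invOneSubPow_val_succ_eq_mk_add_choose, coeff_mk]

def ρ : ℤ⟦X⟧ →+* ℤ⟦X⟧ := rescale (-1 : ℤ)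

lemma rho_one_sub_X : ρ ((1 : ℤ⟦X⟧) - X) = 1 + X := by
  rw [ρ, map_sub, map_one, rescale_X]
  have : C (-1 : ℤ) = -1 := by simp
  rw [this]
  ring

lemma rhoV_mul_one_add_pow (p : ℕ) : ρ (V p) * ((1 : ℤ⟦X⟧) + X) ^ p = 1 := by
  have := congrArg ρ (V_mul_one_sub_pow p)
  rwa [map_mul, map_pow, rho_one_sub_X, map_one] at this

lemma coeff_rho (n : ℕ) (f : ℤ⟦X⟧) : coeff n (ρ f) = (-1) ^ n * coeff n f := by
  unfold ρ; exact coeff_rescale _ _ _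

lemma constantCoeff_rho (f : ℤ⟦X⟧) : constantCoeff (ρ f) = constantCoeff f := by
  rw [← coeff_zero_eq_constantCoeff_apply, coeff_rho]
  simp [coeff_zero_eq_constantCoeff_apply]

lemma constantCoeff_V2 : constantCoeff (V 2) = 1 := by
  rw [← coeff_zero_eq_constantCoeff_apply, show (2 : ℕ) = 1 + 1 from rfl, coeff_V]
  simp

def w : ℤ⟦X⟧ := X ^ 2 * V 3
def u : ℤ⟦X⟧ := X * ρ (V 3)
def Q : ℤ⟦X⟧ := (1 - X) * (1 + X) * (1 - 4 * X - X ^ 2)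

lemma hw : constantCoeff w = 0 := by simp [w]
lemma hu : constantCoeff u = 0 := by simp [u]

def R : ℤ⟦X⟧ := V 2 * comp F w
def L : ℤ⟦X⟧ := ρ (V 2) * comp F u

lemma one_sub_ne : ((1 : ℤ⟦X⟧) - X) ≠ 0 := by
  intro h
  have := congrArg (constantCoeff) h
  simp at this

lemma one_add_ne : ((1 : ℤ⟦X⟧) + X) ≠ 0 := by
  intro h
  have := congrArg (constantCoeff) h
  simp at this

lemma C8 : C (8 : ℤ) = (8 : ℤ⟦X⟧) := by
  exact map_ofNat C 8

lemma hQR : Q * (V 2 * V 2) = 1 - C 8 * w := by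
  apply mul_right_cancel₀ (pow_ne_zero 4 one_sub_ne)
  have e1 : Q * (V 2 * V 2) * ((1 : ℤ⟦X⟧) - X) ^ 4
      = Q * ((V 2 * (1 - X) ^ 2) * (V 2 * (1 - X) ^ 2)) := by ring
  have e2 : ((1 : ℤ⟦X⟧) - C 8 * w) * ((1 : ℤ⟦X⟧) - X) ^ 4
      = (1 - X) ^ 4 - C 8 * X ^ 2 * ((V 3 * (1 - X) ^ 3) * (1 - X)) := by
    rw [w]; ring
  rw [e1, e2, V_mul_one_sub_pow, V_mul_one_sub_pow, C8, Q]
  ring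

lemma hQL : Q * (ρ (V 2) * ρ (V 2)) = 1 - C 8 * u := by
  apply mul_right_cancel₀ (pow_ne_zero 4 one_add_ne)
  have e1 : Q * (ρ (V 2) * ρ (V 2)) * ((1 : ℤ⟦X⟧) + X) ^ 4
      = Q * ((ρ (V 2) * (1 + X) ^ 2) * (ρ (V 2) * (1 + X) ^ 2)) := by ring
  have e2 : ((1 : ℤ⟦X⟧) - C 8 * u) * ((1 : ℤ⟦X⟧) + X) ^ 4
      = (1 + X) ^ 4 - C 8 * X * ((ρ (V 3) * (1 + X) ^ 3) * (1 + X)) := by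
    rw [u]; ring
  rw [e1, e2, rhoV_mul_one_add_pow, rhoV_mul_one_add_pow, C8, Q]
  ring

lemma comp_key {z : ℤ⟦X⟧} (hz : constantCoeff z = 0) :
    ((1 : ℤ⟦X⟧) - C 8 * z) * (comp F z * comp F z) = 1 := by
  have h := congrArg (fun f => comp f z) hF
  simp only [comp_mul hz, comp_sub, comp_one hz, comp_C hz, comp_X hz] at h
  exact h

lemma QR2 : Q * (R * R) = 1 := by
  have : Q * (R * R) = (Q * (V 2 * V 2)) * (comp F w * comp F w) := by rw [R]; ring
  rw [this, hQR, comp_key hw]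

lemma QL2 : Q * (L * L) = 1 := by
  have : Q * (L * L) = (Q * (ρ (V 2) * ρ (V 2))) * (comp F u * comp F u) := by rw [L]; ring
  rw [this, hQL, comp_key hu]

lemma constantCoeff_comp {z : ℤ⟦X⟧} : constantCoeff (comp F z) = 1 := by
  rw [← coeff_zero_eq_constantCoeff_apply, coeff_comp, Finset.sum_range_one, pow_zero, coeff_F]
  simp [d]

lemma L_eq_R : L = R := by
  have hQ : Q ≠ 0 := by
    intro h
    have := congrArg (constantCoeff) h
    simp [Q] at this
  have h2 : L * L = R * R := mul_left_cancel₀ hQ (by rw [QL2, QR2])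
  have h3 : (L - R) * (L + R) = 0 := by
    have : (L - R) * (L + R) = L * L - R * R := by ring
    rw [this, h2, sub_self]
  have h4 : L + R ≠ 0 := by
    intro h
    have hc := congrArg (constantCoeff) h
    rw [map_add, L, R, map_mul, map_mul, constantCoeff_rho, constantCoeff_V2,
      constantCoeff_comp, constantCoeff_comp] at hc
    norm_num at hc
  rcases mul_eq_zero.mp h3 with h | h
  · exact sub_eq_zero.mp h
  · exact absurd h h4

lemma V2w (k : ℕ) : V 2 * w ^ k = X ^ (2 * k) * V (2 + 3 * k) := by
  rw [w, mul_pow, ← pow_mul, ← V_mul_pow]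
  ring

lemma rhoV2u (k : ℕ) : ρ (V 2) * u ^ k = X ^ k * ρ (V (2 + 3 * k)) := by
  rw [u, mul_pow, ← V_mul_pow, map_mul, map_pow]
  ring

lemma coeff_R_eq (n : ℕ) : coeff n R
    = ∑ k ∈ range (n / 2 + 1), ((n + k + 1).choose (3 * k + 1) : ℤ) * d k := by
  rw [R, coeff_mul_comp _ _ hw]
  have hterm : ∀ k, coeff n (V 2 * w ^ k)
      = if 2 * k ≤ n then ((n + k + 1).choose (3 * k + 1) : ℤ) else 0 := by
    intro k
    rw [V2w, coeff_X_pow_mul']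
    split_ifs with h
    · rw [show 2 + 3 * k = (3 * k + 1) + 1 by ring, coeff_V]
      congr 2
      omega
    · rfl
  rw [← Finset.sum_subset (show range (n / 2 + 1) ⊆ range (n + 1) from
      range_subset_range.2 (by omega)) (fun k hk hk' => by
        simp only [mem_range] at hk hk'
        rw [hterm, if_neg (by omega), mul_zero])]
  apply Finset.sum_congr rfl
  intro k hk
  simp only [mem_range] at hk
  rw [hterm, if_pos (by omega), coeff_F]
  ring

lemma coeff_L_eq (n : ℕ) : coeff n L
    = ∑ k ∈ range (n + 1), ((n + 2 * k + 1).choose (3 * k + 1) : ℤ) * (-1 : ℤ) ^ (n - k) * d k := by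
  rw [L, coeff_mul_comp _ _ hu]
  apply Finset.sum_congr rfl
  intro k hk
  simp only [mem_range] at hk
  rw [rhoV2u, coeff_X_pow_mul', if_pos (by omega), coeff_rho,
    show 2 + 3 * k = (3 * k + 1) + 1 by ring, coeff_V, coeff_F,
    show 3 * k + 1 + (n - k) = n + 2 * k + 1 by omega]
  ring

lemma key_identity (n : ℕ) :
    ∑ k ∈ range (n / 2 + 1), ((n + k + 1).choose (3 * k + 1) : ℤ) * d k
      = ∑ k ∈ range (n + 1), ((n + 2 * k + 1).choose (3 * k + 1) : ℤ) * (-1 : ℤ) ^ (n - k) * d k := by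
  rw [← coeff_R_eq, ← coeff_L_eq, L_eq_R]

end
end SelfRep

theorem self_replication_lambda_neg_one (c : ℕ → ℤ) (h0 : c 0 = 1)
    (hrec : ∀ n : ℕ, 1 ≤ n → c n =
      ∑ k ∈ Finset.range (n / 2 + 1),
        ((n + k + 1).choose (3 * k + 1) : ℤ) * (1 : ℤ) ^ (n - 2 * k) * c k
      - ∑ k ∈ Finset.range n,
        ((n + 2 * k + 1).choose (3 * k + 1) : ℤ) * (-1 : ℤ) ^ (n - k) * c k) :
    ∀ n : ℕ, c n = 2 ^ n * ((2 * n).choose n : ℤ) := by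
  intro n
  induction n using Nat.strong_induction_on with
  | _ n ih =>
    rcases Nat.eq_zero_or_pos n with rfl | hn
    · simpa using h0
    have hr := hrec n hn
    have e1 : ∑ k ∈ Finset.range (n / 2 + 1),
        ((n + k + 1).choose (3 * k + 1) : ℤ) * (1 : ℤ) ^ (n - 2 * k) * c k
        = ∑ k ∈ Finset.range (n / 2 + 1),
          ((n + k + 1).choose (3 * k + 1) : ℤ) * SelfRep.d k := by
      apply Finset.sum_congr rfl
      intro k hk
      simp only [Finset.mem_range] at hk
      rw [ih k (by omega), one_pow, mul_one]
      rfl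
    have e2 : ∑ k ∈ Finset.range n,
        ((n + 2 * k + 1).choose (3 * k + 1) : ℤ) * (-1 : ℤ) ^ (n - k) * c k
        = ∑ k ∈ Finset.range n,
          ((n + 2 * k + 1).choose (3 * k + 1) : ℤ) * (-1 : ℤ) ^ (n - k) * SelfRep.d k := by
      apply Finset.sum_congr rfl
      intro k hk
      simp only [Finset.mem_range] at hk
      rw [ih k (by omega)]
      rfl
    have hkey := SelfRep.key_identity n
    have hsplit : ∑ k ∈ Finset.range (n + 1),
        ((n + 2 * k + 1).choose (3 * k + 1) : ℤ) * (-1 : ℤ) ^ (n - k) * SelfRep.d k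
        = (∑ k ∈ Finset.range n,
            ((n + 2 * k + 1).choose (3 * k + 1) : ℤ) * (-1 : ℤ) ^ (n - k) * SelfRep.d k)
          + SelfRep.d n := by
      rw [Finset.sum_range_succ, Nat.sub_self, pow_zero, mul_one,
        show n + 2 * n + 1 = 3 * n + 1 by ring, Nat.choose_self]
      push_cast
      ring
    have : c n = SelfRep.d n := by
      rw [hr, e1, e2, hkey, hsplit]
      ring
    exact this
end

section
/- The formal power series f(z) = ∑_{n≥0} 2^n · C(2n,n) · z^n satisfies, as an identity of formal power series in z, the functional equation (1+z)^{-2} · f(z/(1+z)^3) = (1−z)^{-2} · f(z^2/(1−z)^3). -/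
open PowerSeries

/-- Formal composition `f ∘ g` of power series, valid when `g` has zero constant term:
the `n`-th coefficient is `∑_{k=0}^{n} f_k · [z^n] g^k`. -/
noncomputable def psComp (f g : PowerSeries ℚ) : PowerSeries ℚ :=
  PowerSeries.mk fun n =>
    ∑ k ∈ Finset.range (n + 1), (PowerSeries.coeff k f) * PowerSeries.coeff n (g ^ k)

noncomputable def fSeries : PowerSeries ℚ :=
  PowerSeries.mk fun n => (2 : ℚ) ^ n * ((2 * n).choose n : ℚ)

section Aux

variable {g : PowerSeries ℚ}

lemma coeff_pow_zero (hg : constantCoeff g = 0) {n k : ℕ} (h : n < k) :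
    coeff n (g ^ k) = 0 := by
  have h1 : (X : PowerSeries ℚ) ^ k ∣ g ^ k := pow_dvd_pow_of_dvd (X_dvd_iff.mpr hg) k
  exact X_pow_dvd_iff.mp h1 n h

lemma coeff_eval₂ (hg : constantCoeff g = 0) (P : Polynomial ℚ) (n : ℕ) :
    coeff n (Polynomial.eval₂ C g P) =
      ∑ k ∈ Finset.range (n + 1), P.coeff k * coeff n (g ^ k) := by
  rw [Polynomial.eval₂_eq_sum_range' C
      (lt_of_lt_of_le (Nat.lt_succ_self _) (le_max_left (P.natDegree + 1) (n + 1))) g,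
    map_sum]
  simp_rw [coeff_C_mul]
  refine (Finset.sum_subset (Finset.range_subset_range.mpr (le_max_right (P.natDegree + 1) (n+1)))
    ?_).symm
  intro k hk hk'
  rw [coeff_pow_zero hg (by simpa using hk'), mul_zero]

lemma coeff_psComp (hg : constantCoeff g = 0) (f : PowerSeries ℚ) {n N : ℕ} (hN : n < N) :
    coeff n (psComp f g) = ∑ k ∈ Finset.range N, coeff k f * coeff n (g ^ k) := by
  rw [psComp, coeff_mk]
  refine Finset.sum_subset (Finset.range_subset_range.mpr hN) ?_
  intro k hk hk'
  rw [coeff_pow_zero hg (by simpa using hk'), mul_zero]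

lemma coeff_psComp_eval₂ (hg : constantCoeff g = 0) (f : PowerSeries ℚ) {n N : ℕ} (hN : n < N) :
    coeff n (psComp f g) = coeff n (Polynomial.eval₂ C g (trunc N f)) := by
  rw [coeff_eval₂ hg, coeff_psComp hg f (Nat.lt_succ_self n)]
  refine Finset.sum_congr rfl fun k hk => ?_
  rw [coeff_trunc, if_pos (lt_of_lt_of_le (Finset.mem_range.mp hk) hN)]

lemma psComp_mul (hg : constantCoeff g = 0) (f h : PowerSeries ℚ) :
    psComp (f * h) g = psComp f g * psComp h g := by
  ext n
  rw [coeff_psComp_eval₂ hg (f * h) (Nat.lt_succ_self n)]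
  have key : coeff n (Polynomial.eval₂ C g (trunc (n+1) (f * h)))
      = coeff n (Polynomial.eval₂ C g (trunc (n+1) f * trunc (n+1) h)) := by
    rw [coeff_eval₂ hg, coeff_eval₂ hg]
    refine Finset.sum_congr rfl fun k hk => ?_
    rw [Finset.mem_range] at hk
    congr 1
    rw [Polynomial.coeff_mul, coeff_trunc, if_pos hk, PowerSeries.coeff_mul]
    refine Finset.sum_congr rfl fun p hp => ?_
    rw [Finset.HasAntidiagonal.mem_antidiagonal] at hp
    have hp1 : p.1 < n + 1 := by omega
    have hp2 : p.2 < n + 1 := by omega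
    rw [coeff_trunc, coeff_trunc, if_pos hp1, if_pos hp2]
  rw [key, Polynomial.eval₂_mul, PowerSeries.coeff_mul, PowerSeries.coeff_mul]
  refine Finset.sum_congr rfl fun p hp => ?_
  rw [Finset.HasAntidiagonal.mem_antidiagonal] at hp
  rw [← coeff_psComp_eval₂ hg f (by omega : p.1 < n + 1),
    ← coeff_psComp_eval₂ hg h (by omega : p.2 < n + 1)]

lemma psComp_one : psComp 1 g = 1 := by
  ext n
  rw [psComp, coeff_mk]
  simp [coeff_one, ite_mul]

lemma psComp_C (a : ℚ) : psComp (C a) g = C a := by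
  ext n
  rw [psComp, coeff_mk]
  simp [coeff_C, ite_mul]

lemma psComp_X (hg : constantCoeff g = 0) : psComp X g = g := by
  ext n
  rw [psComp, coeff_mk]
  cases n with
  | zero => simpa [coeff_X] using hg.symm
  | succ n =>
    have h1 : (1:ℕ) ∈ Finset.range (n+2) := by simp
    rw [Finset.sum_eq_single_of_mem 1 h1 (fun k hk hk1 => by simp [coeff_X, hk1])]
    simp

lemma psComp_sub (f h : PowerSeries ℚ) : psComp (f - h) g = psComp f g - psComp h g := by
  ext n
  simp [psComp, coeff_mk, sub_mul, Finset.sum_sub_distrib]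

lemma ode : (1 - 8 * X : PowerSeries ℚ) * (d⁄dX ℚ fSeries) = 4 * fSeries := by
  have h8 : (8 : PowerSeries ℚ) = C 8 := (map_ofNat _ 8).symm
  have h4 : (4 : PowerSeries ℚ) = C 4 := (map_ofNat _ 4).symm
  ext n
  rw [sub_mul, one_mul, map_sub, h8, h4, mul_assoc, coeff_C_mul, coeff_C_mul]
  cases n with
  | zero =>
    have hz : coeff 0 (X * d⁄dX ℚ fSeries) = 0 := by
      rw [coeff_zero_eq_constantCoeff_apply, map_mul, constantCoeff_X, zero_mul]
    rw [hz, mul_zero, sub_zero, coeff_derivative, fSeries, coeff_mk, coeff_mk]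
    norm_num [Nat.choose]
  | succ n =>
    rw [coeff_succ_X_mul, coeff_derivative, coeff_derivative, fSeries, coeff_mk, coeff_mk]
    have h := Nat.succ_mul_centralBinom_succ (n + 1)
    simp only [Nat.centralBinom] at h
    have hq : ((n:ℚ)+1+1) * ((2*(n+1+1)).choose (n+1+1) : ℚ)
        = 2*(2*(n+1)+1) * (((2*(n+1)).choose (n+1)) : ℚ) := by exact_mod_cast h
    push_cast
    push_cast at hq
    linear_combination (2:ℚ)^(n+2) * hq

lemma fsq : fSeries ^ 2 * (1 - 8 * X : PowerSeries ℚ) = 1 := by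
  have h1 : d⁄dX ℚ (1 - 8 * X : PowerSeries ℚ) = -8 := by
    rw [map_sub, show (8 : PowerSeries ℚ) * X = (8:ℚ) • X by rw [smul_eq_C_mul, map_ofNat],
      Derivation.map_smul, derivative_X, Derivation.map_one_eq_zero]
    rw [smul_eq_C_mul, map_ofNat]
    ring
  have h2 : d⁄dX ℚ (fSeries ^ 2) = 2 * fSeries * d⁄dX ℚ fSeries := by
    rw [pow_two, Derivation.leibniz, smul_eq_mul]; ring
  apply derivative.ext
  · rw [Derivation.leibniz, smul_eq_mul, smul_eq_mul, h1, h2, Derivation.map_one_eq_zero]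
    linear_combination (2 * fSeries) * ode
  · have hc : constantCoeff fSeries = 1 := by
      rw [fSeries, ← coeff_zero_eq_constantCoeff_apply, coeff_mk]
      norm_num
    rw [map_mul, map_pow, hc, map_sub, map_mul, constantCoeff_X]
    simp

lemma sq_rel (hg : constantCoeff g = 0) :
    (psComp fSeries g) ^ 2 * (1 - 8 * g) = 1 := by
  have h8 : (8 : PowerSeries ℚ) = C 8 := (map_ofNat _ 8).symm
  have e : psComp (fSeries ^ 2 * (1 - 8 * X)) g
      = (psComp fSeries g) ^ 2 * (1 - 8 * g) := by
    rw [psComp_mul hg, pow_two, psComp_mul hg, h8, psComp_sub, psComp_one,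
      psComp_mul hg, psComp_C, psComp_X hg, ← pow_two]
  rw [← e, fsq, psComp_one]

lemma constantCoeff_psComp : constantCoeff (psComp fSeries g) = 1 := by
  rw [← coeff_zero_eq_constantCoeff_apply, psComp, coeff_mk]
  simp [fSeries, coeff_mk]

end Aux

theorem functional_equation_central_binomial :
    ((1 + X : PowerSeries ℚ)⁻¹) ^ 2 * psComp fSeries (X * ((1 + X)⁻¹) ^ 3)
      = ((1 - X : PowerSeries ℚ)⁻¹) ^ 2 * psComp fSeries (X ^ 2 * ((1 - X)⁻¹) ^ 3) := by
  have hu0 : constantCoeff (1 + X : PowerSeries ℚ) ≠ 0 := by simp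
  have hv0 : constantCoeff (1 - X : PowerSeries ℚ) ≠ 0 := by simp
  set u := (1 + X : PowerSeries ℚ)⁻¹ with hu_def
  set v := (1 - X : PowerSeries ℚ)⁻¹ with hv_def
  have hu : (1 + X : PowerSeries ℚ) * u = 1 := PowerSeries.mul_inv_cancel _ hu0
  have hv : (1 - X : PowerSeries ℚ) * v = 1 := PowerSeries.mul_inv_cancel _ hv0
  set A := (X : PowerSeries ℚ) * u ^ 3 with hA_def
  set B := (X : PowerSeries ℚ) ^ 2 * v ^ 3 with hB_def
  have hA0 : constantCoeff A = 0 := by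
    rw [hA_def, map_mul, constantCoeff_X, zero_mul]
  have hB0 : constantCoeff B = 0 := by
    rw [hB_def, map_mul, map_pow, constantCoeff_X]
    ring
  set F := psComp fSeries A with hF_def
  set G := psComp fSeries B with hG_def
  have hF : F ^ 2 * (1 - 8 * A) = 1 := sq_rel hA0
  have hG : G ^ 2 * (1 - 8 * B) = 1 := sq_rel hB0
  set L := u ^ 2 * F with hL_def
  set R := v ^ 2 * G with hR_def
  have hW : (1 + X : PowerSeries ℚ) ^ 4 * (1 - 8 * A)
      = (1 - X : PowerSeries ℚ) ^ 4 * (1 - 8 * B) := by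
    have e1 : (1 + X : PowerSeries ℚ) ^ 4 * (1 - 8 * A)
        = (1 + X) ^ 4 - 8 * X * (1 + X) * ((1 + X) * u) ^ 3 := by
      rw [hA_def]; ring
    have e2 : (1 - X : PowerSeries ℚ) ^ 4 * (1 - 8 * B)
        = (1 - X) ^ 4 - 8 * X ^ 2 * (1 - X) * ((1 - X) * v) ^ 3 := by
      rw [hB_def]; ring
    rw [e1, e2, hu, hv]
    ring
  have hW1 : constantCoeff ((1 + X : PowerSeries ℚ) ^ 4 * (1 - 8 * A)) = 1 := by
    rw [map_mul, map_pow, map_sub, map_add, map_mul, hA0, constantCoeff_X]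
    simp
  have hW0 : ((1 + X : PowerSeries ℚ) ^ 4 * (1 - 8 * A)) ≠ 0 := by
    intro h
    rw [h, map_zero] at hW1
    exact zero_ne_one hW1
  have cL : L ^ 2 * ((1 + X : PowerSeries ℚ) ^ 4 * (1 - 8 * A)) = 1 := by
    have : L ^ 2 * ((1 + X : PowerSeries ℚ) ^ 4 * (1 - 8 * A))
        = ((1 + X) * u) ^ 4 * (F ^ 2 * (1 - 8 * A)) := by
      rw [hL_def]; ring
    rw [this, hu, hF]; ring
  have cR : R ^ 2 * ((1 + X : PowerSeries ℚ) ^ 4 * (1 - 8 * A)) = 1 := by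
    rw [hW]
    have : R ^ 2 * ((1 - X : PowerSeries ℚ) ^ 4 * (1 - 8 * B))
        = ((1 - X) * v) ^ 4 * (G ^ 2 * (1 - 8 * B)) := by
      rw [hR_def]; ring
    rw [this, hv, hG]; ring
  have hsq : L ^ 2 = R ^ 2 := mul_right_cancel₀ hW0 (cL.trans cR.symm)
  have hcu : constantCoeff u = 1 := by
    have := congrArg (constantCoeff) hu
    simpa using this
  have hcv : constantCoeff v = 1 := by
    have := congrArg (constantCoeff) hv
    simpa using this
  have hLR : L + R ≠ 0 := by
    intro h
    have h2 : constantCoeff (L + R) = 2 := by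
      rw [map_add, hL_def, hR_def, map_mul, map_mul, map_pow, map_pow, hcu, hcv,
        hF_def, hG_def, constantCoeff_psComp, constantCoeff_psComp]
      norm_num
    rw [h, map_zero] at h2
    exact two_ne_zero h2.symm
  have hz : (L - R) * (L + R) = 0 := by
    have : (L - R) * (L + R) = L ^ 2 - R ^ 2 := by ring
    rw [this, hsq, sub_self]
  rcases mul_eq_zero.mp hz with h | h
  · exact sub_eq_zero.mp h
  · exact absurd h hLR
end

section
/- For every prime p, every nonnegative integer m, and integers r ≥ 1, the central binomial coefficients satisfy C(2·m·p^r, m·p^r) ≡ C(2·m·p^{r−1}, m·p^{r−1}) (mod p^{3r}) when p ≥ 5. -/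
open Finset

namespace JL

/-- the non-multiples of `p` in `(0, M]`. -/
def U (p M : ℕ) : Finset ℕ := (Finset.Ioc 0 M).filter (fun j => ¬ p ∣ j)

/-- product of non-multiples of `p` up to `M`. -/
def ff (p M : ℕ) : ℕ := ∏ j ∈ U p M, j

lemma mem_U {p M j : ℕ} : j ∈ U p M ↔ (0 < j ∧ j ≤ M) ∧ ¬ p ∣ j := by
  simp [U, Finset.mem_filter, Finset.mem_Ioc]

lemma sum_U_split {p a b : ℕ} (h : a ≤ b) {A : Type*} [AddCommMonoid A] (f : ℕ → A) :
    ∑ j ∈ U p b, f j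
      = ∑ j ∈ U p a, f j + ∑ j ∈ (Ioc a b).filter (fun j => ¬ p ∣ j), f j := by
  rw [U, U, sum_filter, sum_filter, sum_filter, ← sum_Ioc_consecutive _ (Nat.zero_le a) h]

lemma prod_U_split {p a b : ℕ} (h : a ≤ b) {A : Type*} [CommMonoid A] (f : ℕ → A) :
    ∏ j ∈ U p b, f j
      = (∏ j ∈ U p a, f j) * ∏ j ∈ (Ioc a b).filter (fun j => ¬ p ∣ j), f j := by
  rw [U, U, prod_filter, prod_filter, prod_filter, ← prod_Ioc_consecutive _ (Nat.zero_le a) h]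

lemma sum_block_shift {p N c : ℕ} (hN : p ∣ N) {A : Type*} [AddCommMonoid A] (f : ℕ → A) :
    ∑ j ∈ (Ioc N (N + c)).filter (fun j => ¬ p ∣ j), f j
      = ∑ j ∈ U p c, f (j + N) := by
  apply Finset.sum_nbij' (i := fun j => j - N) (j := fun j => j + N)
  · intro a ha
    simp only [mem_filter, mem_Ioc, mem_U] at ha ⊢
    refine ⟨⟨by omega, by omega⟩, fun hd => ha.2 ?_⟩
    have : a = (a - N) + N := by omega
    rw [this]; exact Nat.dvd_add hd hN
  · intro a ha
    rw [mem_U] at ha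
    simp only [mem_filter, mem_Ioc]
    refine ⟨⟨by omega, by omega⟩, fun hd => ha.2 ?_⟩
    rw [add_comm] at hd
    exact (Nat.dvd_add_right hN).mp hd
  · intro a ha; simp only [mem_filter, mem_Ioc] at ha; omega
  · intro a ha; omega
  · intro a ha
    simp only [mem_filter, mem_Ioc] at ha
    congr 1; omega

lemma prod_block_shift {p N c : ℕ} (hN : p ∣ N) {A : Type*} [CommMonoid A] (f : ℕ → A) :
    ∏ j ∈ (Ioc N (N + c)).filter (fun j => ¬ p ∣ j), f j
      = ∏ j ∈ U p c, f (j + N) := by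
  apply Finset.prod_nbij' (i := fun j => j - N) (j := fun j => j + N)
  · intro a ha
    simp only [mem_filter, mem_Ioc, mem_U] at ha ⊢
    refine ⟨⟨by omega, by omega⟩, fun hd => ha.2 ?_⟩
    have : a = (a - N) + N := by omega
    rw [this]; exact Nat.dvd_add hd hN
  · intro a ha
    rw [mem_U] at ha
    simp only [mem_filter, mem_Ioc]
    refine ⟨⟨by omega, by omega⟩, fun hd => ha.2 ?_⟩
    rw [add_comm] at hd
    exact (Nat.dvd_add_right hN).mp hd
  · intro a ha; simp only [mem_filter, mem_Ioc] at ha; omega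
  · intro a ha; omega
  · intro a ha
    simp only [mem_filter, mem_Ioc] at ha
    congr 1; omega

lemma prod_Ioc_id (n : ℕ) : ∏ x ∈ Ioc 0 n, x = n.factorial := by
  induction n with
  | zero => simp
  | succ n ih => rw [prod_Ioc_succ_top (Nat.zero_le _), ih, Nat.factorial_succ, mul_comm]

lemma fact_eq {p : ℕ} (hp : 0 < p) : ∀ m : ℕ,
    (m * p).factorial = ff p (m * p) * p ^ m * m.factorial := by
  intro m
  induction m with
  | zero => simp [ff, U]
  | succ m ih =>
    have hle : m * p ≤ (m + 1) * p := Nat.mul_le_mul_right p (by omega)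
    have hsingle : (Ioc (m * p) ((m + 1) * p)).filter (fun j => p ∣ j) = {(m + 1) * p} := by
      ext x
      simp only [mem_filter, mem_Ioc, mem_singleton]
      constructor
      · rintro ⟨⟨h1, h2⟩, q, rfl⟩
        have hq1 : ¬ q ≤ m := by
          intro hq
          have hA : p * q ≤ p * m := Nat.mul_le_mul_left p hq
          have hB : p * m = m * p := mul_comm _ _
          omega
        have hq2 : q ≤ m + 1 := by
          by_contra hq
          push_neg at hq
          have h3 : p * (m + 2) ≤ p * q := Nat.mul_le_mul_left p (by omega)
          have h4 : (m + 1) * p < p * (m + 2) := by nlinarith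
          omega
        have : q = m + 1 := by omega
        rw [this, mul_comm]
      · rintro rfl
        exact ⟨⟨by nlinarith, le_refl _⟩, ⟨m + 1, mul_comm _ _⟩⟩
    have key : ((m + 1) * p).factorial
        = (m * p).factorial * ∏ x ∈ Ioc (m * p) ((m + 1) * p), x := by
      rw [← prod_Ioc_id, ← prod_Ioc_id, prod_Ioc_consecutive _ (Nat.zero_le _) hle]
    have hblock : ∏ x ∈ Ioc (m * p) ((m + 1) * p), x
        = ((m + 1) * p) * ∏ x ∈ (Ioc (m * p) ((m + 1) * p)).filter (fun j => ¬ p ∣ j), x := by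
      rw [← prod_filter_mul_prod_filter_not (Ioc (m * p) ((m + 1) * p)) (fun j => p ∣ j),
        hsingle, prod_singleton]
    have hffsplit : ff p ((m + 1) * p)
        = ff p (m * p) * ∏ x ∈ (Ioc (m * p) ((m + 1) * p)).filter (fun j => ¬ p ∣ j), x :=
      prod_U_split hle _
    rw [key, ih, hblock, hffsplit, Nat.factorial_succ, pow_succ]
    ring

lemma key_id (p n : ℕ) (hp : 0 < p) :
    (2 * (n * p)).choose (n * p) * (ff p (n * p)) ^ 2
      = (2 * n).choose n * ff p (2 * (n * p)) := by
  have h2 : 2 * (n * p) = (2 * n) * p := by ring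
  have e1 := Nat.choose_mul_factorial_mul_factorial (show n * p ≤ 2 * (n * p) by omega)
  rw [show 2 * (n * p) - n * p = n * p by omega] at e1
  have e2 := Nat.choose_mul_factorial_mul_factorial (show n ≤ 2 * n by omega)
  rw [show 2 * n - n = n by omega] at e2
  have f1 := fact_eq hp n
  have f2 := fact_eq hp (2 * n)
  rw [← h2] at f2
  apply Nat.eq_of_mul_eq_mul_right
    (show 0 < p ^ (2 * n) * (n.factorial) ^ 2 by positivity)
  calc (2 * (n * p)).choose (n * p) * ff p (n * p) ^ 2 * (p ^ (2 * n) * n.factorial ^ 2)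
      = (2 * (n * p)).choose (n * p) * (ff p (n * p) * p ^ n * n.factorial)
          * (ff p (n * p) * p ^ n * n.factorial) := by ring
    _ = (2 * (n * p)).choose (n * p) * (n * p).factorial * (n * p).factorial := by rw [← f1]
    _ = (2 * (n * p)).factorial := e1
    _ = ff p (2 * (n * p)) * p ^ (2 * n) * (2 * n).factorial := f2
    _ = ff p (2 * (n * p)) * p ^ (2 * n) * ((2 * n).choose n * n.factorial * n.factorial) := by
        rw [e2]
    _ = (2 * n).choose n * ff p (2 * (n * p)) * (p ^ (2 * n) * n.factorial ^ 2) := by ring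

lemma ff_double {p M : ℕ} (hM : p ∣ M) :
    ff p (2 * M) = ff p M * ∏ j ∈ U p M, (M + j) := by
  have h1 : ff p (M + M) = ff p M * ∏ j ∈ (Ioc M (M + M)).filter (fun j => ¬ p ∣ j), j :=
    prod_U_split (by omega) _
  have h2 : ∏ j ∈ (Ioc M (M + M)).filter (fun j => ¬ p ∣ j), j
      = ∏ j ∈ U p M, (j + M) := prod_block_shift hM _
  rw [show 2 * M = M + M by ring, h1, h2]
  congr 1
  exact Finset.prod_congr rfl (fun j _ => by ring)


lemma unit_cancel {R : Type*} [CommMonoidWithZero R] {a x : R} (h : IsUnit a)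
    (hx : a * x = 0) : x = 0 := by
  obtain ⟨u, rfl⟩ := h
  calc x = ↑u⁻¹ * (↑u * x) := by rw [← mul_assoc, Units.inv_mul, one_mul]
    _ = 0 := by rw [hx, mul_zero]

lemma unit_cancel_eq {R : Type*} [CommMonoid R] {a x y : R} (h : IsUnit a)
    (hxy : a * x = a * y) : x = y := by
  obtain ⟨u, rfl⟩ := h
  calc x = ↑u⁻¹ * (↑u * x) := by rw [← mul_assoc, Units.inv_mul, one_mul]
    _ = ↑u⁻¹ * (↑u * y) := by rw [hxy]
    _ = y := by rw [← mul_assoc, Units.inv_mul, one_mul]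

/-- symmetric-function identity: `A1² = ∑ Q_j² + P · A2`. -/
lemma L_iden {R : Type*} [CommSemiring R] (T : Finset ℕ) (g : ℕ → R) :
    (∑ j ∈ T, ∏ k ∈ T.erase j, g k) ^ 2
      = ∑ j ∈ T, (∏ k ∈ T.erase j, g k) ^ 2
        + (∏ k ∈ T, g k) * ∑ q ∈ T.offDiag, ∏ k ∈ (T.erase q.1).erase q.2, g k := by
  rw [sq, Finset.sum_mul_sum, ← Finset.sum_product', ← Finset.diag_union_offDiag T,
    Finset.sum_union (Finset.disjoint_diag_offDiag T), Finset.sum_diag]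
  congr 1
  · exact Finset.sum_congr rfl fun j _ => (sq _).symm
  · rw [Finset.mul_sum]
    refine Finset.sum_congr rfl fun q hq => ?_
    obtain ⟨hq1, hq2, hne⟩ := Finset.mem_offDiag.mp hq
    have h1 : ∏ k ∈ T.erase q.1, g k
        = g q.2 * ∏ k ∈ (T.erase q.1).erase q.2, g k :=
      (Finset.mul_prod_erase _ _ (Finset.mem_erase.mpr ⟨hne.symm, hq2⟩)).symm
    have h3 : ∏ k ∈ T.erase q.2, g k
        = g q.1 * ∏ k ∈ (T.erase q.1).erase q.2, g k := by
      rw [← Finset.erase_right_comm]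
      exact (Finset.mul_prod_erase _ _ (Finset.mem_erase.mpr ⟨hne, hq1⟩)).symm
    have h2 : ∏ k ∈ T, g k = g q.1 * ∏ k ∈ T.erase q.1, g k :=
      (Finset.mul_prod_erase _ _ hq1).symm
    rw [h1, h3, h2, h1]
    ring

/-- expansion of `∏ (x + g j)` modulo `x³ = 0`. -/
lemma K_expand {R : Type*} [CommRing R] (x : R) (hx : x ^ 3 = 0) (g : ℕ → R)
    (T : Finset ℕ) :
    2 * ∏ j ∈ T, (x + g j)
      = 2 * ∏ j ∈ T, g j
        + 2 * x * (∑ j ∈ T, ∏ k ∈ T.erase j, g k)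
        + x ^ 2 * ∑ q ∈ T.offDiag, ∏ k ∈ (T.erase q.1).erase q.2, g k := by
  induction T using Finset.induction_on with
  | empty => simp
  | @insert a T ha ih =>
    have hA1 : ∑ j ∈ insert a T, ∏ k ∈ (insert a T).erase j, g k
        = ∏ k ∈ T, g k + g a * ∑ j ∈ T, ∏ k ∈ T.erase j, g k := by
      rw [Finset.sum_insert ha, Finset.erase_insert ha, Finset.mul_sum]
      congr 1
      refine Finset.sum_congr rfl fun j hj => ?_
      rw [Finset.erase_insert_of_ne (fun h : a = j => ha (h ▸ hj)),
        Finset.prod_insert (fun h => ha (Finset.mem_of_mem_erase h))]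
    have hd2 : Disjoint T.offDiag ({a} ×ˢ T) := by
      rw [Finset.disjoint_left]
      rintro ⟨x1, x2⟩ hx1 hx2
      obtain ⟨hm1, _, _⟩ := Finset.mem_offDiag.mp hx1
      obtain ⟨hs, _⟩ := Finset.mem_product.mp hx2
      exact ha ((Finset.mem_singleton.mp hs) ▸ hm1)
    have hd1 : Disjoint (T.offDiag ∪ {a} ×ˢ T) (T ×ˢ {a}) := by
      rw [Finset.disjoint_left]
      rintro ⟨x1, x2⟩ hx1 hx2
      obtain ⟨_, hs⟩ := Finset.mem_product.mp hx2
      have hx2a : x2 = a := Finset.mem_singleton.mp hs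
      rcases Finset.mem_union.mp hx1 with h | h
      · obtain ⟨_, hm2, _⟩ := Finset.mem_offDiag.mp h
        exact ha (hx2a ▸ hm2)
      · obtain ⟨_, hm2⟩ := Finset.mem_product.mp h
        exact ha (hx2a ▸ hm2)
    have hA2 : ∑ q ∈ (insert a T).offDiag, ∏ k ∈ ((insert a T).erase q.1).erase q.2, g k
        = 2 * ∑ j ∈ T, ∏ k ∈ T.erase j, g k
          + g a * ∑ q ∈ T.offDiag, ∏ k ∈ (T.erase q.1).erase q.2, g k := by
      rw [Finset.offDiag_insert ha, Finset.sum_union hd1, Finset.sum_union hd2]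
      have e0 : ∑ q ∈ T.offDiag, ∏ k ∈ ((insert a T).erase q.1).erase q.2, g k
          = g a * ∑ q ∈ T.offDiag, ∏ k ∈ (T.erase q.1).erase q.2, g k := by
        rw [Finset.mul_sum]
        refine Finset.sum_congr rfl fun q hq => ?_
        obtain ⟨hm1, hm2, _⟩ := Finset.mem_offDiag.mp hq
        rw [Finset.erase_insert_of_ne (fun h : a = q.1 => ha (h ▸ hm1)),
          Finset.erase_insert_of_ne (fun h : a = q.2 => ha (h ▸ hm2)),
          Finset.prod_insert
            (fun h => ha (Finset.mem_of_mem_erase (Finset.mem_of_mem_erase h)))]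
      have e1 : ∑ q ∈ {a} ×ˢ T, ∏ k ∈ ((insert a T).erase q.1).erase q.2, g k
          = ∑ j ∈ T, ∏ k ∈ T.erase j, g k := by
        rw [Finset.sum_product, Finset.sum_singleton]
        refine Finset.sum_congr rfl fun j _ => ?_
        rw [Finset.erase_insert ha]
      have e2 : ∑ q ∈ T ×ˢ {a}, ∏ k ∈ ((insert a T).erase q.1).erase q.2, g k
          = ∑ j ∈ T, ∏ k ∈ T.erase j, g k := by
        rw [Finset.sum_product]
        refine Finset.sum_congr rfl fun j hj => ?_
        rw [Finset.sum_singleton,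
          Finset.erase_insert_of_ne (fun h : a = j => ha (h ▸ hj)),
          Finset.erase_insert (fun h => ha (Finset.mem_of_mem_erase h))]
      rw [e0, e1, e2]
      ring
    rw [Finset.prod_insert ha, Finset.prod_insert ha, hA1, hA2]
    have step : 2 * ((x + g a) * ∏ j ∈ T, (x + g j))
        = (x + g a) * (2 * ∏ j ∈ T, (x + g j)) := by ring
    rw [step, ih]
    linear_combination (∑ q ∈ T.offDiag, ∏ k ∈ (T.erase q.1).erase q.2, g k) * hx

lemma six_sq (N : ℕ) : 6 * ∑ j ∈ Ioc 0 N, j ^ 2 = N * (N + 1) * (2 * N + 1) := by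
  induction N with
  | zero => simp
  | succ N ih =>
    rw [Finset.sum_Ioc_succ_top (Nat.zero_le _), Nat.mul_add, ih]
    ring

lemma sq_dvd {p s : ℕ} (hp : p.Prime) (hp5 : 5 ≤ p) (hs : 1 ≤ s) :
    p ^ s ∣ ∑ j ∈ U p (p ^ s), j ^ 2 := by
  have hp0 : 0 < p := hp.pos
  have hps : p ^ s = p * p ^ (s - 1) := by
    conv_lhs => rw [show s = (s - 1) + 1 by omega]
    rw [pow_succ']
  have himg : (Ioc 0 (p ^ s)).filter (fun j => p ∣ j)
      = (Ioc 0 (p ^ (s - 1))).image (fun i => p * i) := by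
    ext x
    simp only [mem_filter, mem_Ioc, mem_image]
    constructor
    · rintro ⟨⟨h0, h1⟩, q, rfl⟩
      have hq0 : q ≠ 0 := by rintro rfl; simp at h0
      refine ⟨q, ⟨by omega, ?_⟩, rfl⟩
      rw [hps] at h1
      exact Nat.le_of_mul_le_mul_left h1 hp0
    · rintro ⟨q, ⟨h0, h1⟩, rfl⟩
      refine ⟨⟨Nat.mul_pos hp0 h0, ?_⟩, ⟨q, rfl⟩⟩
      rw [hps]
      exact Nat.mul_le_mul_left p h1
  have hmul : ∑ j ∈ (Ioc 0 (p ^ s)).filter (fun j => p ∣ j), j ^ 2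
      = p ^ 2 * ∑ i ∈ Ioc 0 (p ^ (s - 1)), i ^ 2 := by
    rw [himg, Finset.sum_image (fun x _ y _ h => Nat.eq_of_mul_eq_mul_left hp0 h),
      Finset.mul_sum]
    exact Finset.sum_congr rfl fun i _ => by ring
  have hsplit : (∑ j ∈ (Ioc 0 (p ^ s)).filter (fun j => p ∣ j), j ^ 2)
      + ∑ j ∈ U p (p ^ s), j ^ 2 = ∑ j ∈ Ioc 0 (p ^ s), j ^ 2 :=
    Finset.sum_filter_add_sum_filter_not _ _ _
  have h6T : 6 * ∑ j ∈ Ioc 0 (p ^ s), j ^ 2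
      = p ^ s * ((p ^ s + 1) * (2 * p ^ s + 1)) := by rw [six_sq]; ring
  have h6Y : 6 * ∑ i ∈ Ioc 0 (p ^ (s - 1)), i ^ 2
      = p ^ (s - 1) * ((p ^ (s - 1) + 1) * (2 * p ^ (s - 1) + 1)) := by rw [six_sq]; ring
  have hdvd1 : p ^ s ∣ 6 * ∑ j ∈ Ioc 0 (p ^ s), j ^ 2 := h6T ▸ dvd_mul_right _ _
  have hdvd2 : p ^ s ∣ 6 * ∑ j ∈ (Ioc 0 (p ^ s)).filter (fun j => p ∣ j), j ^ 2 := by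
    have hcalc : 6 * ∑ j ∈ (Ioc 0 (p ^ s)).filter (fun j => p ∣ j), j ^ 2
        = p ^ (s + 1) * ((p ^ (s - 1) + 1) * (2 * p ^ (s - 1) + 1)) := by
      rw [hmul, show 6 * (p ^ 2 * ∑ i ∈ Ioc 0 (p ^ (s - 1)), i ^ 2)
          = p ^ 2 * (6 * ∑ i ∈ Ioc 0 (p ^ (s - 1)), i ^ 2) by ring, h6Y,
        ← mul_assoc, ← pow_add, show 2 + (s - 1) = s + 1 by omega]
    rw [hcalc]
    exact (pow_dvd_pow p (Nat.le_succ s)).mul_right _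
  have h6X : 6 * ∑ j ∈ U p (p ^ s), j ^ 2
      = 6 * (∑ j ∈ Ioc 0 (p ^ s), j ^ 2)
        - 6 * ∑ j ∈ (Ioc 0 (p ^ s)).filter (fun j => p ∣ j), j ^ 2 := by omega
  have hdvd : p ^ s ∣ 6 * ∑ j ∈ U p (p ^ s), j ^ 2 :=
    h6X ▸ Nat.dvd_sub hdvd1 hdvd2
  have hcp : Nat.Coprime p 6 := by
    rw [hp.coprime_iff_not_dvd]
    intro h
    have := Nat.le_of_dvd (by norm_num) h
    interval_cases p
    · omega
    · exact absurd hp (by norm_num)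
  exact (hcp.pow_left s).dvd_of_dvd_mul_left hdvd


section ZModPart

variable {p s : ℕ}

lemma isUnit_cast (hp : p.Prime) {k j : ℕ} (hj : ¬ p ∣ j) :
    IsUnit ((j : ZMod (p ^ k))) := by
  rw [ZMod.isUnit_iff_coprime]
  exact Nat.Coprime.pow_right _ ((hp.coprime_iff_not_dvd.mpr hj).symm)

lemma zmod_inv_inv {n : ℕ} (x : ZMod n) (h : IsUnit x) : x⁻¹⁻¹ = x := by
  have h1 := ZMod.inv_mul_of_unit x h
  have h2 : IsUnit x⁻¹ := IsUnit.of_mul_eq_one x h1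
  have h3 := ZMod.inv_mul_of_unit _ h2
  calc x⁻¹⁻¹ = x⁻¹⁻¹ * (x⁻¹ * x) := by rw [h1, mul_one]
    _ = (x⁻¹⁻¹ * x⁻¹) * x := by ring
    _ = x := by rw [h3, one_mul]

lemma block_zero (hp : p.Prime) (hp5 : 5 ≤ p) (hs : 1 ≤ s) :
    ∑ j ∈ U p (p ^ s), ((j : ZMod (p ^ s))⁻¹) ^ 2 = 0 := by
  have hp0 : 0 < p := hp.pos
  haveI : NeZero (p ^ s) := ⟨by positivity⟩
  haveI : Fact (1 < p ^ s) := ⟨Nat.one_lt_pow (by omega) hp.one_lt⟩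
  have hlt : ∀ j ∈ U p (p ^ s), j < p ^ s := by
    intro j hj
    obtain ⟨⟨h0, h1⟩, h2⟩ := mem_U.mp hj
    rcases Nat.lt_or_ge j (p ^ s) with h | h
    · exact h
    · exfalso; exact h2 (by rw [show j = p ^ s by omega]; exact dvd_pow_self p (by omega))
  have hstep : ∑ j ∈ U p (p ^ s), ((j : ZMod (p ^ s))⁻¹) ^ 2
      = ∑ j ∈ U p (p ^ s), ((j : ZMod (p ^ s))) ^ 2 := by
    have hval : ∀ j ∈ U p (p ^ s), ((((j : ZMod (p ^ s))⁻¹).val : ℕ) : ZMod (p ^ s))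
        = (j : ZMod (p ^ s))⁻¹ := fun j _ => ZMod.natCast_rightInverse _
    have hmem' : ∀ j ∈ U p (p ^ s), ((j : ZMod (p ^ s))⁻¹).val ∈ U p (p ^ s) := by
      intro j hj
      obtain ⟨⟨h0, h1⟩, h2⟩ := mem_U.mp hj
      have hu := isUnit_cast hp (k := s) h2
      have huinv : IsUnit ((j : ZMod (p ^ s))⁻¹) :=
        IsUnit.of_mul_eq_one _ (ZMod.inv_mul_of_unit _ hu)
      refine mem_U.mpr ⟨⟨?_, le_of_lt (ZMod.val_lt _)⟩, ?_⟩
      · rcases Nat.eq_zero_or_pos (((j : ZMod (p ^ s))⁻¹).val) with h | h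
        swap
        · exact h
        · exfalso
          have : ((j : ZMod (p ^ s))⁻¹) = 0 := by
            rw [← hval j hj, h, Nat.cast_zero]
          rw [this] at huinv
          exact not_isUnit_zero huinv
      · intro hd
        have hu2 : IsUnit ((((j : ZMod (p ^ s))⁻¹).val : ℕ) : ZMod (p ^ s)) := by
          rw [hval j hj]; exact huinv
        rw [ZMod.isUnit_iff_coprime] at hu2
        have : p ∣ Nat.gcd (((j : ZMod (p ^ s))⁻¹).val) (p ^ s) :=
          Nat.dvd_gcd hd (dvd_pow_self p (by omega))
        rw [hu2] at this
        have := Nat.le_of_dvd (by norm_num) this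
        omega
    refine Finset.sum_nbij' (i := fun j => ((j : ZMod (p ^ s))⁻¹).val)
      (j := fun j => ((j : ZMod (p ^ s))⁻¹).val) hmem' hmem' ?_ ?_ ?_
    · intro j hj
      have hu := isUnit_cast hp (k := s) (mem_U.mp hj).2
      show ((((j : ZMod (p ^ s))⁻¹).val : ZMod (p ^ s))⁻¹).val = j
      rw [hval j hj, zmod_inv_inv _ hu, ZMod.val_cast_of_lt (hlt j hj)]
    · intro j hj
      have hu := isUnit_cast hp (k := s) (mem_U.mp hj).2
      show ((((j : ZMod (p ^ s))⁻¹).val : ZMod (p ^ s))⁻¹).val = j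
      rw [hval j hj, zmod_inv_inv _ hu, ZMod.val_cast_of_lt (hlt j hj)]
    · intro j hj
      show (j : ZMod (p ^ s))⁻¹ ^ 2 = ((((j : ZMod (p ^ s))⁻¹).val : ℕ) : ZMod (p ^ s)) ^ 2
      rw [hval j hj]
  rw [hstep]
  have hzero : ((∑ j ∈ U p (p ^ s), j ^ 2 : ℕ) : ZMod (p ^ s)) = 0 :=
    (ZMod.natCast_eq_zero_iff _ _).mpr (sq_dvd hp hp5 hs)
  push_cast at hzero
  exact hzero

lemma core (hp : p.Prime) (hp5 : 5 ≤ p) (hs : 1 ≤ s) :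
    ∀ t : ℕ, ∑ j ∈ U p (p ^ s * t), ((j : ZMod (p ^ s))⁻¹) ^ 2 = 0
  | 0 => by simp [U]
  | (t + 1) => by
    have hrw : p ^ s * (t + 1) = p ^ s * t + p ^ s := by ring
    rw [hrw, sum_U_split (Nat.le_add_right _ _), core hp hp5 hs t, zero_add,
      sum_block_shift (Dvd.dvd.mul_right (dvd_pow_self p (by omega)) t)]
    have hc : ∀ j : ℕ, ((j + p ^ s * t : ℕ) : ZMod (p ^ s)) = (j : ZMod (p ^ s)) := by
      intro j
      have h0 : ((p ^ s * t : ℕ) : ZMod (p ^ s)) = 0 :=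
        (ZMod.natCast_eq_zero_iff _ _).mpr (dvd_mul_right _ _)
      rw [Nat.cast_add, h0, add_zero]
    simp only [hc]
    exact block_zero hp hp5 hs

lemma key_cong (hp : p.Prime) (hp5 : 5 ≤ p) (hs : 1 ≤ s) (t : ℕ) :
    (∏ j ∈ U p (p ^ s * t), (p ^ s * t + j)) ≡ ∏ j ∈ U p (p ^ s * t), j [MOD p ^ (3 * s)] := by
  have hp0 : 0 < p := hp.pos
  rcases Nat.eq_zero_or_pos t with rfl | ht
  · simp [U, Nat.ModEq]
  set M := p ^ s * t with hMdef
  set T := U p M with hT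
  have hmem : ∀ j ∈ T, 0 < j ∧ j ≤ M ∧ ¬ p ∣ j := by
    intro j hj
    obtain ⟨⟨a, b⟩, c⟩ := mem_U.mp hj
    exact ⟨a, b, c⟩
  have hpM : p ∣ M := (dvd_pow_self p (by omega)).mul_right t
  have hpsM : p ^ s ∣ M := dvd_mul_right _ _
  have hjlt : ∀ j ∈ T, j < M := by
    intro j hj
    have hle := (hmem j hj).2.1
    rcases Nat.lt_or_ge j M with h | h
    · exact h
    · exfalso
      exact (hmem j hj).2.2 (by rw [show j = M by omega]; exact hpM)
  have hMjmem : ∀ j ∈ T, M - j ∈ T := by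
    intro j hj
    have hlt := hjlt j hj
    refine mem_U.mpr ⟨⟨by omega, by omega⟩, fun hdvd => (hmem j hj).2.2 ?_⟩
    have := Nat.dvd_sub hpM hdvd
    rwa [Nat.sub_sub_self (le_of_lt hlt)] at this
  have hMjne : ∀ j ∈ T, M - j ≠ j := by
    intro j hj heq
    have hlt := hjlt j hj
    have h2j : 2 * j = M := by omega
    have hdvd : p ∣ 2 * j := h2j ▸ hpM
    rcases (Nat.Prime.dvd_mul hp).mp hdvd with h | h
    · have := Nat.le_of_dvd (by norm_num) h; omega
    · exact (hmem j hj).2.2 h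
  -- ℕ-level quantities
  set P := ∏ j ∈ T, j with hP
  set A1 := ∑ j ∈ T, ∏ k ∈ T.erase j, k with hA1
  set B := ∑ j ∈ T, ∏ k ∈ (T.erase j).erase (M - j), k with hB
  set SQ := ∑ j ∈ T, (∏ k ∈ T.erase j, k) ^ 2 with hSQ
  set A2 := ∑ q ∈ T.offDiag, ∏ k ∈ (T.erase q.1).erase q.2, k with hA2
  have hfac1 : ∀ j ∈ T, j * ∏ k ∈ T.erase j, k = P := fun j hj =>
    Finset.mul_prod_erase T (fun k => k) hj
  have hfac2 : ∀ j ∈ T, ∏ k ∈ T.erase j, k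
      = (M - j) * ∏ k ∈ (T.erase j).erase (M - j), k := by
    intro j hj
    exact (Finset.mul_prod_erase _ _
      (Finset.mem_erase.mpr ⟨hMjne j hj, hMjmem j hj⟩)).symm
  have hQflip : ∀ j ∈ T, ∏ k ∈ T.erase (M - j), k
      = j * ∏ k ∈ (T.erase j).erase (M - j), k := by
    intro j hj
    have hjmem' : j ∈ T.erase (M - j) :=
      Finset.mem_erase.mpr ⟨fun h => hMjne j hj h.symm, hj⟩
    rw [← Finset.mul_prod_erase _ _ hjmem', Finset.erase_right_comm]
  -- F1 : pairing
  have hF1 : 2 * A1 = M * B := by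
    have hre : A1 = ∑ j ∈ T, ∏ k ∈ T.erase (M - j), k := by
      refine Finset.sum_nbij' (i := fun j => M - j) (j := fun j => M - j)
        hMjmem hMjmem ?_ ?_ ?_
      · intro j hj
        have := hjlt j hj; have := (hmem j hj).1
        show M - (M - j) = j
        omega
      · intro j hj
        have := hjlt j hj; have := (hmem j hj).1
        show M - (M - j) = j
        omega
      · intro j hj
        have hlt := hjlt j hj; have hpos := (hmem j hj).1
        show ∏ k ∈ T.erase j, k = ∏ k ∈ T.erase (M - (M - j)), k
        rw [show M - (M - j) = j by omega]
    calc 2 * A1 = A1 + A1 := by ring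
      _ = ∑ j ∈ T, (∏ k ∈ T.erase j, k + ∏ k ∈ T.erase (M - j), k) := by
          nth_rewrite 2 [hre]
          nth_rewrite 1 [hA1]
          rw [← Finset.sum_add_distrib]
      _ = ∑ j ∈ T, M * ∏ k ∈ (T.erase j).erase (M - j), k := by
          refine Finset.sum_congr rfl fun j hj => ?_
          have hlt := hjlt j hj
          rw [hfac2 j hj, hQflip j hj, ← add_mul, show M - j + j = M by omega]
      _ = M * B := by rw [hB, Finset.mul_sum]
  -- F2 : symmetric identity
  have hF2 : A1 ^ 2 = SQ + P * A2 := by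
    simpa using L_iden T (fun k => (k : ℕ))
  -- S-level facts
  have hcore : ∑ j ∈ T, ((j : ZMod (p ^ s))⁻¹) ^ 2 = 0 := core hp hp5 hs t
  have hQS : ∀ j ∈ T, ((∏ k ∈ T.erase j, k : ℕ) : ZMod (p ^ s))
      = (j : ZMod (p ^ s))⁻¹ * ((P : ℕ) : ZMod (p ^ s)) := by
    intro j hj
    have hu := isUnit_cast hp (k := s) (hmem j hj).2.2
    have h1 : (j : ZMod (p ^ s)) * ((∏ k ∈ T.erase j, k : ℕ) : ZMod (p ^ s))
        = ((P : ℕ) : ZMod (p ^ s)) := by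
      rw [← Nat.cast_mul, hfac1 j hj]
    calc ((∏ k ∈ T.erase j, k : ℕ) : ZMod (p ^ s))
        = ((j : ZMod (p ^ s))⁻¹ * (j : ZMod (p ^ s)))
          * ((∏ k ∈ T.erase j, k : ℕ) : ZMod (p ^ s)) := by
          rw [ZMod.inv_mul_of_unit _ hu, one_mul]
      _ = (j : ZMod (p ^ s))⁻¹ * ((P : ℕ) : ZMod (p ^ s)) := by
          rw [mul_assoc, h1]
  have hF4 : p ^ s ∣ SQ := by
    apply (ZMod.natCast_eq_zero_iff _ _).mp
    rw [hSQ, Nat.cast_sum]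
    calc ∑ j ∈ T, (((∏ k ∈ T.erase j, k) ^ 2 : ℕ) : ZMod (p ^ s))
        = ∑ j ∈ T, ((j : ZMod (p ^ s))⁻¹) ^ 2 * ((P : ℕ) : ZMod (p ^ s)) ^ 2 := by
          refine Finset.sum_congr rfl fun j hj => ?_
          rw [Nat.cast_pow, hQS j hj]
          ring
      _ = (∑ j ∈ T, ((j : ZMod (p ^ s))⁻¹) ^ 2) * ((P : ℕ) : ZMod (p ^ s)) ^ 2 := by
          rw [Finset.sum_mul]
      _ = 0 := by rw [hcore, zero_mul]
  have hRS : ∀ j ∈ T, ((∏ k ∈ (T.erase j).erase (M - j), k : ℕ) : ZMod (p ^ s))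
      = -(((j : ZMod (p ^ s))⁻¹) ^ 2 * ((P : ℕ) : ZMod (p ^ s))) := by
    intro j hj
    have hu := isUnit_cast hp (k := s) (hmem j hj).2.2
    have hinv := ZMod.inv_mul_of_unit _ hu
    have hMj : ((M - j : ℕ) : ZMod (p ^ s)) = -(j : ZMod (p ^ s)) := by
      rw [Nat.cast_sub (le_of_lt (hjlt j hj)),
        (ZMod.natCast_eq_zero_iff M (p ^ s)).mpr hpsM, zero_sub]
    have e : -((j : ZMod (p ^ s))
          * ((∏ k ∈ (T.erase j).erase (M - j), k : ℕ) : ZMod (p ^ s)))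
        = (j : ZMod (p ^ s))⁻¹ * ((P : ℕ) : ZMod (p ^ s)) := by
      rw [← hQS j hj, hfac2 j hj, Nat.cast_mul, hMj]
      ring
    linear_combination (-(j : ZMod (p ^ s))⁻¹) * e
      - (((∏ k ∈ (T.erase j).erase (M - j), k : ℕ) : ZMod (p ^ s))) * hinv
  have hF3 : p ^ s ∣ B := by
    apply (ZMod.natCast_eq_zero_iff _ _).mp
    rw [hB, Nat.cast_sum]
    calc ∑ j ∈ T, ((∏ k ∈ (T.erase j).erase (M - j), k : ℕ) : ZMod (p ^ s))
        = ∑ j ∈ T, -(((j : ZMod (p ^ s))⁻¹) ^ 2 * ((P : ℕ) : ZMod (p ^ s))) :=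
          Finset.sum_congr rfl hRS
      _ = -((∑ j ∈ T, ((j : ZMod (p ^ s))⁻¹) ^ 2) * ((P : ℕ) : ZMod (p ^ s))) := by
          rw [Finset.sum_neg_distrib, Finset.sum_mul]
      _ = 0 := by rw [hcore, zero_mul, neg_zero]
  -- now in R = ZMod (p ^ (3 * s))
  rw [← ZMod.natCast_eq_natCast_iff, Nat.cast_prod, Nat.cast_prod]
  have hcast : ∀ j : ℕ, ((M + j : ℕ) : ZMod (p ^ (3 * s)))
      = ((M : ℕ) : ZMod (p ^ (3 * s))) + (j : ZMod (p ^ (3 * s))) := fun j => Nat.cast_add _ _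
  simp only [hcast]
  have hx3 : ((M : ℕ) : ZMod (p ^ (3 * s))) ^ 3 = 0 := by
    rw [← Nat.cast_pow, show M ^ 3 = p ^ (3 * s) * t ^ 3 by rw [hMdef]; ring,
      Nat.cast_mul, ZMod.natCast_self, zero_mul]
  have hexp := K_expand _ hx3 (fun k => (k : ZMod (p ^ (3 * s)))) T
  have hA1c : ∑ j ∈ T, ∏ k ∈ T.erase j, (k : ZMod (p ^ (3 * s)))
      = ((A1 : ℕ) : ZMod (p ^ (3 * s))) := by
    rw [hA1, Nat.cast_sum]
    exact Finset.sum_congr rfl fun j _ => (Nat.cast_prod _ _).symm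
  have hA2c : ∑ q ∈ T.offDiag, ∏ k ∈ (T.erase q.1).erase q.2, (k : ZMod (p ^ (3 * s)))
      = ((A2 : ℕ) : ZMod (p ^ (3 * s))) := by
    rw [hA2, Nat.cast_sum]
    exact Finset.sum_congr rfl fun q _ => (Nat.cast_prod _ _).symm
  have h2u : IsUnit (2 : ZMod (p ^ (3 * s))) := by
    rw [show (2 : ZMod (p ^ (3 * s))) = ((2 : ℕ) : ZMod (p ^ (3 * s))) by push_cast; ring,
      ZMod.isUnit_iff_coprime]
    have hc2 : Nat.Coprime 2 p := by
      have : ¬ p ∣ 2 := fun h => by have := Nat.le_of_dvd (by norm_num) h; omega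
      exact ((hp.coprime_iff_not_dvd).mpr this).symm
    exact hc2.pow_right _
  have hMA1 : ((M : ℕ) : ZMod (p ^ (3 * s))) * ((A1 : ℕ) : ZMod (p ^ (3 * s))) = 0 := by
    apply unit_cancel h2u
    obtain ⟨b, hb⟩ := hF3
    have hnat : 2 * (M * A1) = p ^ (3 * s) * (t ^ 2 * b) := by
      rw [show 2 * (M * A1) = M * (2 * A1) by ring, hF1, hb]
      rw [hMdef]; ring
    calc (2 : ZMod (p ^ (3 * s)))
          * (((M : ℕ) : ZMod (p ^ (3 * s))) * ((A1 : ℕ) : ZMod (p ^ (3 * s))))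
        = ((2 * (M * A1) : ℕ) : ZMod (p ^ (3 * s))) := by push_cast; ring
      _ = ((p ^ (3 * s) * (t ^ 2 * b) : ℕ) : ZMod (p ^ (3 * s))) := by rw [hnat]
      _ = 0 := by rw [Nat.cast_mul, ZMod.natCast_self, zero_mul]
  have hF2R : ((A1 : ℕ) : ZMod (p ^ (3 * s))) ^ 2
      = ((SQ : ℕ) : ZMod (p ^ (3 * s)))
        + ((P : ℕ) : ZMod (p ^ (3 * s))) * ((A2 : ℕ) : ZMod (p ^ (3 * s))) := by
    have := congrArg (fun x : ℕ => (x : ZMod (p ^ (3 * s)))) hF2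
    push_cast at this
    exact this
  have hM2A2 : ((M : ℕ) : ZMod (p ^ (3 * s))) ^ 2 * ((A2 : ℕ) : ZMod (p ^ (3 * s))) = 0 := by
    have hPu : IsUnit ((P : ℕ) : ZMod (p ^ (3 * s))) := by
      rw [ZMod.isUnit_iff_coprime]
      refine Nat.Coprime.pow_right _ ?_
      rw [hP]
      exact Nat.Coprime.prod_left fun j hj =>
        ((hp.coprime_iff_not_dvd).mpr (hmem j hj).2.2).symm
    apply unit_cancel hPu
    obtain ⟨q, hq⟩ := hF4
    have hnat2 : M ^ 2 * SQ = p ^ (3 * s) * (t ^ 2 * q) := by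
      rw [hq, hMdef]; ring
    have hsq0 : ((M : ℕ) : ZMod (p ^ (3 * s))) ^ 2 * ((A1 : ℕ) : ZMod (p ^ (3 * s))) ^ 2
        = 0 := by
      rw [show ((M : ℕ) : ZMod (p ^ (3 * s))) ^ 2 * ((A1 : ℕ) : ZMod (p ^ (3 * s))) ^ 2
        = (((M : ℕ) : ZMod (p ^ (3 * s))) * ((A1 : ℕ) : ZMod (p ^ (3 * s)))) ^ 2 by ring,
        hMA1]
      ring
    have hMSQ : ((M : ℕ) : ZMod (p ^ (3 * s))) ^ 2 * ((SQ : ℕ) : ZMod (p ^ (3 * s))) = 0 := by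
      calc ((M : ℕ) : ZMod (p ^ (3 * s))) ^ 2 * ((SQ : ℕ) : ZMod (p ^ (3 * s)))
          = ((M ^ 2 * SQ : ℕ) : ZMod (p ^ (3 * s))) := by push_cast; ring
        _ = 0 := by rw [hnat2, Nat.cast_mul, ZMod.natCast_self, zero_mul]
    linear_combination (-((M : ℕ) : ZMod (p ^ (3 * s))) ^ 2) * hF2R + hsq0 - hMSQ
  apply unit_cancel_eq h2u
  rw [hexp, hA1c, hA2c]
  have hPc : ∏ j ∈ T, (j : ZMod (p ^ (3 * s))) = ((P : ℕ) : ZMod (p ^ (3 * s))) := by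
    rw [hP, Nat.cast_prod]
  linear_combination (2 : ZMod (p ^ (3 * s))) * hMA1 + hM2A2

end ZModPart

end JL

theorem jacobsthal_ljunggren (p m r : ℕ) (hp : p.Prime) (hp5 : 5 ≤ p) (hr : 1 ≤ r) :
    (2 * (m * p ^ r)).choose (m * p ^ r)
      ≡ (2 * (m * p ^ (r - 1))).choose (m * p ^ (r - 1)) [MOD p ^ (3 * r)] := by
  have hp0 : 0 < p := hp.pos
  set n := m * p ^ (r - 1) with hn
  have hnp : n * p = p ^ r * m := by
    rw [hn, mul_assoc, ← pow_succ, Nat.sub_add_cancel hr, mul_comm]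
  have hcong := JL.key_cong hp hp5 hr m
  rw [← hnp] at hcong
  have h1 : JL.ff p (2 * (n * p)) ≡ JL.ff p (n * p) * JL.ff p (n * p) [MOD p ^ (3 * r)] := by
    rw [JL.ff_double (dvd_mul_left p n)]
    exact Nat.ModEq.mul_left _ hcong
  have h2 := JL.key_id p n hp0
  have h3 : (2 * (n * p)).choose (n * p) * JL.ff p (n * p) ^ 2
      ≡ (2 * n).choose n * JL.ff p (n * p) ^ 2 [MOD p ^ (3 * r)] := by
    rw [h2]
    calc (2 * n).choose n * JL.ff p (2 * (n * p))
        ≡ (2 * n).choose n * (JL.ff p (n * p) * JL.ff p (n * p)) [MOD p ^ (3 * r)] :=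
          Nat.ModEq.mul_left _ h1
      _ = (2 * n).choose n * JL.ff p (n * p) ^ 2 := by ring
  have hcop : (p ^ (3 * r)).gcd (JL.ff p (n * p) ^ 2) = 1 := by
    have h0 : Nat.Coprime p (JL.ff p (n * p)) := by
      rw [JL.ff]
      exact Nat.Coprime.prod_right fun j hj =>
        (hp.coprime_iff_not_dvd).mpr (JL.mem_U.mp hj).2
    exact Nat.Coprime.pow _ _ h0
  have h4 : (2 * (n * p)).choose (n * p) ≡ (2 * n).choose n [MOD p ^ (3 * r)] := by
    apply Nat.ModEq.cancel_left_of_coprime hcop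
    have := h3
    rw [mul_comm ((2 * (n * p)).choose (n * p)) _, mul_comm ((2 * n).choose n) _] at this
    exact this
  have hgoal1 : n * p = m * p ^ r := by rw [hnp, mul_comm]
  rw [← hgoal1]
  exact h4
end

section
/- For every prime p and every nonnegative integer n with base-p expansion n = n_0 + n_1 p + ··· + n_r p^r (0 ≤ n_i < p), the central binomial coefficients satisfy the Lucas congruence C(2n, n) ≡ C(2n_0, n_0) · C(2n_1, n_1) ··· C(2n_r, n_r) (mod p). -/
theorem lucas_congruence_central_binomial (p n : ℕ) (hp : p.Prime) :
    (2 * n).choose n ≡ ((Nat.digits p n).map fun d => (2 * d).choose d).prod [MOD p] := by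
  haveI : Fact p.Prime := ⟨hp⟩
  induction n using Nat.strong_induction_on with
  | _ n ih =>
    rcases Nat.eq_zero_or_pos n with rfl | hn
    · simp [Nat.ModEq.refl]
    have hp2 : 1 < p := hp.one_lt
    rw [Nat.digits_def' hp2 hn, List.map_cons, List.prod_cons]
    set q := n / p with hq
    set r := n % p with hr
    have hrp : r < p := Nat.mod_lt _ (by omega)
    have hqn : q < n := Nat.div_lt_self hn hp2
    have key : (2 * n).choose n ≡ (2 * n % p).choose r * (2 * n / p).choose q [MOD p] :=
      Choose.choose_modEq_choose_mod_mul_choose_div_nat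
    have hn2 : 2 * n = (2 * q) * p + 2 * r := by
      conv_lhs => rw [← Nat.div_add_mod n p]
      ring
    by_cases h2r : 2 * r < p
    · have hmod : 2 * n % p = 2 * r := by
        rw [hn2, Nat.add_comm, Nat.add_mul_mod_self_right, Nat.mod_eq_of_lt h2r]
      have hdiv : 2 * n / p = 2 * q := by
        rw [hn2, Nat.add_comm, Nat.add_mul_div_right _ _ (by omega : 0 < p),
          Nat.div_eq_of_lt h2r, Nat.zero_add]
      rw [hmod, hdiv] at key
      calc (2 * n).choose n ≡ (2 * r).choose r * (2 * q).choose q [MOD p] := key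
        _ ≡ (2 * r).choose r * ((Nat.digits p q).map fun d => (2 * d).choose d).prod [MOD p] :=
          Nat.ModEq.mul_left _ (ih q hqn)
    · -- carry case: both sides divisible by p
      have hmod : 2 * n % p = 2 * r - p := by
        rw [hn2]
        have : (2 * q) * p + 2 * r = ((2 * q + 1) * p) + (2 * r - p) := by ring_nf; omega
        rw [this, Nat.add_comm, Nat.add_mul_mod_self_right,
          Nat.mod_eq_of_lt (by omega : 2 * r - p < p)]
      have hzero : (2 * n % p).choose r = 0 := by
        rw [hmod]; exact Nat.choose_eq_zero_of_lt (by omega)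
      have hlhs : (2 * n).choose n ≡ 0 [MOD p] := by
        calc (2 * n).choose n ≡ (2 * n % p).choose r * (2 * n / p).choose q [MOD p] := key
          _ = 0 := by rw [hzero, zero_mul]
      have hrdvd : p ∣ (2 * r).choose r := by
        apply hp.dvd_choose (by omega : r < p) (by omega : 2 * r - r < p) (by omega : p ≤ 2 * r)
      have hrhs : (2 * r).choose r * ((Nat.digits p q).map fun d => (2 * d).choose d).prod
          ≡ 0 [MOD p] := by
        obtain ⟨c, hc⟩ := hrdvd
        rw [hc]
        simp [Nat.ModEq, mul_assoc]
      exact hlhs.trans hrhs.symm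
end

section
/- For every prime p and every nonnegative integer n with base-p expansion n = n_0 + n_1 p + ··· + n_r p^r, the Apéry-like sequence A(n) = ∑_{k=0}^{n} C(n,k)^2 · C(n+k,k) (the Apéry numbers associated to ζ(2)) satisfies A(n) ≡ A(n_0) · A(n_1) ··· A(n_r) (mod p). -/
/-- The Apéry numbers associated to ζ(2): `A(n) = ∑_{k=0}^{n} C(n,k)^2 · C(n+k,k)`. -/
def aperyZeta2 (n : ℕ) : ℕ :=
  ∑ k ∈ Finset.range (n + 1), n.choose k ^ 2 * (n + k).choose k

open Finset

/-- The summand after Vandermonde expansion. -/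
def apT (n k j : ℕ) : ℕ := n.choose k ^ 2 * (n.choose (k - j) * k.choose j)

lemma vander (n k : ℕ) :
    (n + k).choose k = ∑ j ∈ range (k + 1), n.choose (k - j) * k.choose j := by
  rw [Nat.add_choose_eq, Finset.Nat.sum_antidiagonal_eq_sum_range_succ_mk]
  rw [← Finset.sum_range_reflect]
  refine Finset.sum_congr rfl fun j hj => ?_
  simp only [mem_range] at hj
  have h1 : k + 1 - 1 - j = k - j := by omega
  have h2 : k - (k - j) = j := by omega
  rw [h1, h2]

lemma apery_eq (n : ℕ) :
    aperyZeta2 n = ∑ k ∈ range (n + 1), ∑ j ∈ range (k + 1), apT n k j := by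
  unfold aperyZeta2
  refine Finset.sum_congr rfl fun k _ => ?_
  rw [vander, Finset.mul_sum]
  rfl

lemma sum_range_pmul {β : Type*} [AddCommMonoid β] (p M : ℕ) (f : ℕ → β) :
    ∑ k ∈ range (p * M), f k
      = ∑ k1 ∈ range M, ∑ k0 ∈ range p, f (k0 + p * k1) := by
  induction M with
  | zero => simp
  | succ M ih =>
    rw [Nat.mul_succ, Finset.sum_range_add, ih, Finset.sum_range_succ]
    congr 1
    refine Finset.sum_congr rfl fun k0 _ => ?_
    rw [Nat.add_comm (p * M) k0]

section Key

variable {p : ℕ} [hF : Fact p.Prime]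

lemma lucasZMod (x y : ℕ) :
    ((x.choose y : ZMod p)) = ((x % p).choose (y % p) : ZMod p) * ((x / p).choose (y / p)) := by
  have := (ZMod.natCast_eq_natCast_iff _ _ _).mpr
    (Choose.choose_modEq_choose_mod_mul_choose_div_nat (n := x) (k := y) (p := p))
  push_cast at this
  exact this

lemma term_eq (a m k0 k1 j0 j1 : ℕ) (ha : a < p) (hk0 : k0 < p) (hj0 : j0 < p) :
    ((apT (a + p * m) (k0 + p * k1) (j0 + p * j1) : ZMod p))
      = (apT m k1 j1 : ZMod p) * (apT a k0 j0 : ZMod p) := by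
  have hp : 0 < p := hF.out.pos
  have hnm : (a + p * m) % p = a := by rw [Nat.add_mul_mod_self_left, Nat.mod_eq_of_lt ha]
  have hnd : (a + p * m) / p = m := by
    rw [Nat.add_mul_div_left _ _ hp, Nat.div_eq_of_lt ha, Nat.zero_add]
  have hkm : (k0 + p * k1) % p = k0 := by rw [Nat.add_mul_mod_self_left, Nat.mod_eq_of_lt hk0]
  have hkd : (k0 + p * k1) / p = k1 := by
    rw [Nat.add_mul_div_left _ _ hp, Nat.div_eq_of_lt hk0, Nat.zero_add]
  have hjm : (j0 + p * j1) % p = j0 := by rw [Nat.add_mul_mod_self_left, Nat.mod_eq_of_lt hj0]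
  have hjd : (j0 + p * j1) / p = j1 := by
    rw [Nat.add_mul_div_left _ _ hp, Nat.div_eq_of_lt hj0, Nat.zero_add]
  unfold apT
  push_cast
  rw [lucasZMod (a + p * m) (k0 + p * k1), hnm, hnd, hkm, hkd]
  rw [lucasZMod (k0 + p * k1) (j0 + p * j1), hkm, hkd, hjm, hjd]
  by_cases hle : j0 ≤ k0 ∧ j1 ≤ k1
  · have hsub : k0 + p * k1 - (j0 + p * j1) = (k0 - j0) + p * (k1 - j1) := by
      obtain ⟨d, rfl⟩ : ∃ d, k1 = j1 + d := ⟨k1 - j1, by omega⟩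
      rw [Nat.mul_add, Nat.add_sub_cancel_left]
      omega
    have hsm : ((k0 - j0) + p * (k1 - j1)) % p = k0 - j0 := by
      rw [Nat.add_mul_mod_self_left, Nat.mod_eq_of_lt (by omega)]
    have hsd : ((k0 - j0) + p * (k1 - j1)) / p = k1 - j1 := by
      rw [Nat.add_mul_div_left _ _ hp, Nat.div_eq_of_lt (by omega), Nat.zero_add]
    rw [hsub, lucasZMod (a + p * m) ((k0 - j0) + p * (k1 - j1))]
    rw [hnm, hnd, hsm, hsd]
    ring
  · rcases Nat.lt_or_ge k0 j0 with h | h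
    · have h0 : (k0.choose j0 : ZMod p) = 0 := by
        rw [Nat.choose_eq_zero_of_lt h]; push_cast; rfl
      rw [h0]; ring
    · have h1 : k1 < j1 := by omega
      have h0 : (k1.choose j1 : ZMod p) = 0 := by
        rw [Nat.choose_eq_zero_of_lt h1]; push_cast; rfl
      rw [h0]; ring

lemma key_s9 (a m : ℕ) (ha : a < p) :
    ((aperyZeta2 (a + p * m) : ZMod p)) = (aperyZeta2 a : ZMod p) * (aperyZeta2 m : ZMod p) := by
  have hp : 0 < p := hF.out.pos
  set n := a + p * m with hn
  -- Step A: extend outer range to p*(m+1) over ℕ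
  have hA : aperyZeta2 n
      = ∑ k ∈ range (p * (m + 1)), ∑ j ∈ range (k + 1), apT n k j := by
    rw [apery_eq]
    refine Finset.sum_subset (Finset.range_subset_range.mpr (by simp [hn]; nlinarith)) ?_
    intro k _ hk
    simp only [mem_range, not_lt] at hk
    have : n.choose k = 0 := Nat.choose_eq_zero_of_lt (by omega)
    simp [apT, this]
  -- Step B: reindex outer sum
  have hB : aperyZeta2 n
      = ∑ k1 ∈ range (m + 1), ∑ k0 ∈ range p,
          ∑ j ∈ range ((k0 + p * k1) + 1), apT n (k0 + p * k1) j := by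
    rw [hA, sum_range_pmul]
  -- Step C: extend inner j ranges
  have hC : aperyZeta2 n
      = ∑ k1 ∈ range (m + 1), ∑ k0 ∈ range p,
          ∑ j ∈ range (p * (k1 + 1)), apT n (k0 + p * k1) j := by
    rw [hB]
    refine Finset.sum_congr rfl fun k1 _ => Finset.sum_congr rfl fun k0 hk0 => ?_
    simp only [mem_range] at hk0
    refine Finset.sum_subset (Finset.range_subset_range.mpr (by nlinarith)) ?_
    intro j _ hj
    simp only [mem_range, not_lt] at hj
    have : (k0 + p * k1).choose j = 0 := Nat.choose_eq_zero_of_lt (by omega)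
    simp [apT, this]
  -- Step D: reindex inner sums
  have hD : aperyZeta2 n
      = ∑ k1 ∈ range (m + 1), ∑ k0 ∈ range p,
          ∑ j1 ∈ range (k1 + 1), ∑ j0 ∈ range p,
            apT n (k0 + p * k1) (j0 + p * j1) := by
    rw [hC]
    exact Finset.sum_congr rfl fun k1 _ => Finset.sum_congr rfl fun k0 _ =>
      sum_range_pmul p (k1 + 1) _
  -- Cast A(a) into an extended double sum over ℕ
  have hAa : aperyZeta2 a
      = ∑ k0 ∈ range p, ∑ j0 ∈ range p, apT a k0 j0 := by
    rw [apery_eq]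
    have h1 : ∑ k0 ∈ range (a + 1), ∑ j0 ∈ range (k0 + 1), apT a k0 j0
        = ∑ k0 ∈ range p, ∑ j0 ∈ range (k0 + 1), apT a k0 j0 := by
      refine Finset.sum_subset (Finset.range_subset_range.mpr (by omega)) ?_
      intro k _ hk
      simp only [mem_range, not_lt] at hk
      have : a.choose k = 0 := Nat.choose_eq_zero_of_lt (by omega)
      simp [apT, this]
    rw [h1]
    refine Finset.sum_congr rfl fun k0 hk0 => ?_
    simp only [mem_range] at hk0
    refine Finset.sum_subset (Finset.range_subset_range.mpr (by omega)) ?_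
    intro j _ hj
    simp only [mem_range, not_lt] at hj
    have : k0.choose j = 0 := Nat.choose_eq_zero_of_lt (by omega)
    simp [apT, this]
  rw [hD, hAa, apery_eq m]
  push_cast
  rw [mul_comm, Finset.sum_mul_sum]
  refine Finset.sum_congr rfl fun k1 hk1 => Finset.sum_congr rfl fun k0 hk0 => ?_
  rw [Finset.sum_mul_sum]
  refine Finset.sum_congr rfl fun j1 hj1 => Finset.sum_congr rfl fun j0 hj0 => ?_
  simp only [mem_range] at hk0 hj0
  have := term_eq (p := p) a m k0 k1 j0 j1 ha hk0 hj0
  push_cast at this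
  exact this

end Key

theorem lucas_congruence_apery (p n : ℕ) (hp : p.Prime) :
    aperyZeta2 n ≡ ((Nat.digits p n).map aperyZeta2).prod [MOD p] := by
  haveI : Fact p.Prime := ⟨hp⟩
  induction n using Nat.strong_induction_on with
  | _ n ih =>
    rcases Nat.eq_zero_or_pos n with rfl | hn
    · simp only [Nat.digits_zero, List.map_nil, List.prod_nil]
      simp [aperyZeta2]
      rfl
    · have hp2 : 1 < p := hp.one_lt
      rw [Nat.digits_def' hp2 hn]
      simp only [List.map_cons, List.prod_cons]
      have hdiv : n / p < n := Nat.div_lt_self hn hp2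
      have ihd := ih (n / p) hdiv
      have hkey : aperyZeta2 n ≡ aperyZeta2 (n % p) * aperyZeta2 (n / p) [MOD p] := by
        rw [← ZMod.natCast_eq_natCast_iff]
        push_cast
        have := key_s9 (p := p) (n % p) (n / p) (Nat.mod_lt n hp.pos)
        rw [Nat.mod_add_div] at this
        exact this
      exact hkey.trans (Nat.ModEq.mul_left _ ihd)
end

section
/- If λ is any integer and (c_n)_{n≥0} is defined by c_0 = 1 and the self-replication recursion c_n = ∑_{k=0}^{⌊n/2⌋} C(n+k+1, 3k+1)(−λ)^{n−2k} c_k − ∑_{k=0}^{n−1} C(n+2k+1, 3k+1)(−λ)^{n−k} c_k (the case μ = λ), then c_n = 0 for all n ≥ 1. -/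
theorem self_replication_mu_eq_lambda (lam : ℤ) (c : ℕ → ℤ) (h0 : c 0 = 1)
    (hrec : ∀ n : ℕ, 1 ≤ n → c n =
      ∑ k ∈ Finset.range (n / 2 + 1),
        ((n + k + 1).choose (3 * k + 1) : ℤ) * (-lam) ^ (n - 2 * k) * c k
      - ∑ k ∈ Finset.range n,
        ((n + 2 * k + 1).choose (3 * k + 1) : ℤ) * (-lam) ^ (n - k) * c k) :
    ∀ n : ℕ, 1 ≤ n → c n = 0 := by
  intro n
  induction n using Nat.strong_induction_on with
  | _ n ih =>
    intro hn
    have hz : ∀ k, k ≠ 0 → k < n → c k = 0 := fun k h1 h2 =>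
      ih k h2 (Nat.one_le_iff_ne_zero.mpr h1)
    have e1 : ∑ k ∈ Finset.range (n / 2 + 1),
        ((n + k + 1).choose (3 * k + 1) : ℤ) * (-lam) ^ (n - 2 * k) * c k
        = ((n + 1).choose 1 : ℤ) * (-lam) ^ n * c 0 := by
      rw [Finset.sum_eq_single_of_mem 0 (Finset.mem_range.mpr (Nat.succ_pos _))]
      · norm_num
      · intro k hk hk0
        rw [hz k hk0 (lt_of_le_of_lt (Nat.lt_succ_iff.mp (Finset.mem_range.mp hk))
          (Nat.div_lt_self (Nat.lt_of_lt_of_le Nat.zero_lt_one hn) one_lt_two)), mul_zero]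
    have e2 : ∑ k ∈ Finset.range n,
        ((n + 2 * k + 1).choose (3 * k + 1) : ℤ) * (-lam) ^ (n - k) * c k
        = ((n + 1).choose 1 : ℤ) * (-lam) ^ n * c 0 := by
      rw [Finset.sum_eq_single_of_mem 0
        (Finset.mem_range.mpr (Nat.lt_of_lt_of_le Nat.zero_lt_one hn))]
      · norm_num
      · intro k hk hk0
        rw [hz k hk0 (Finset.mem_range.mp hk), mul_zero]
    rw [hrec n hn, e1, e2, sub_self]
end
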